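/- arXiv:0910.2875 — 4 statements merged into one kernel-verified Lean document; each statement's English description precedes it below -/
import Mathlib

section
/- Let (ψ_{s,t}) be an evolution family in 𝔻 with common Denjoy–Wolff point 0, with associated generalized Herglotz function p, and set λ(t) := ∫₀^t p(0,ξ) dξ. Assume that L := lim_{t→+∞} Re λ(t) < +∞. Then for each z ∈ 𝔻 with z ≠ 0 and each s ≥ 0 there exists a real constant c = c(s,z) such that ω_A = exp(i·c)·ω_λ, where: ω_A is the set of all u ∈ ℂ such that ψ_{s,t_n}(z)/|ψ_{s,t_n}(z)| → u for some sequence t_n → +∞ (note ψ_{s,t}(z) ≠ 0 for z ≠ 0); ω_λ is the set of all v ∈ ℂ such that exp(−i·Im λ(t_n)) → v for some sequence t_n → +∞; and exp(i·c)·ω_λ := { exp(i·c)·v : v ∈ ω_λ }. -/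
open Complex MeasureTheory Set Filter Topology

noncomputable def Complex.abs : AbsoluteValue ℂ ℝ where
  toFun z := ‖z‖
  map_mul' := norm_mul
  nonneg' := norm_nonneg
  eq_zero' _ := norm_eq_zero
  add_le' := norm_add_le

theorem Complex.norm_eq_abs (z : ℂ) : ‖z‖ = Complex.abs z := rfl

theorem Complex.abs.pos {z : ℂ} (h : z ≠ 0) : 0 < Complex.abs z := norm_pos_iff.mpr h

theorem Complex.abs.ne_zero {z : ℂ} (h : z ≠ 0) : Complex.abs z ≠ 0 := norm_ne_zero_iff.mpr h

theorem Complex.sq_abs (z : ℂ) : Complex.abs z ^ 2 = Complex.normSq z := Complex.sq_norm z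

theorem Complex.abs_exp (z : ℂ) : Complex.abs (Complex.exp z) = Real.exp z.re :=
  Complex.norm_exp z

theorem Complex.abs_exp_sub_one_le {x : ℂ} (hx : Complex.abs x ≤ 1) :
    Complex.abs (Complex.exp x - 1) ≤ 2 * Complex.abs x := Complex.norm_exp_sub_one_le hx

theorem Complex.abs_ofReal (r : ℝ) : Complex.abs (r : ℂ) = |r| := by
  change ‖(r : ℂ)‖ = |r|; simp

theorem Complex.re_le_abs (z : ℂ) : z.re ≤ Complex.abs z := Complex.re_le_norm z

theorem Complex.abs_re_le_abs (z : ℂ) : |z.re| ≤ Complex.abs z := Complex.abs_re_le_norm z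

theorem Complex.abs_mul_exp_arg_mul_I (x : ℂ) :
    ↑(Complex.abs x) * Complex.exp (Complex.arg x * Complex.I) = x :=
  Complex.norm_mul_exp_arg_mul_I x

theorem Complex.continuous_abs : Continuous Complex.abs := continuous_norm

theorem Complex.abs_le_abs_of_mapsTo_ball_self {f : ℂ → ℂ} {R : ℝ} {z : ℂ}
    (hd : DifferentiableOn ℂ f (Metric.ball 0 R))
    (h_maps : Set.MapsTo f (Metric.ball 0 R) (Metric.ball 0 R)) (h₀ : f 0 = 0)
    (hz : Complex.abs z < R) : Complex.abs (f z) ≤ Complex.abs z :=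
  norm_le_norm_of_mapsTo_ball hd (h_maps.mono_right Metric.ball_subset_closedBall) h₀ hz

/-- The open unit disk `𝔻`. -/
def UD : Set ℂ := {z : ℂ | ‖z‖ < 1}

lemma UD_eq_ball : UD = Metric.ball (0:ℂ) 1 := by
  ext z; simp [UD, Metric.mem_ball, Complex.dist_eq]

lemma isOpen_UD : IsOpen UD := UD_eq_ball ▸ Metric.isOpen_ball

lemma sq_abs_iden (A B : ℂ) :
    Complex.abs (A + (starRingEnd ℂ) B) ^ 2 - Complex.abs (A - B) ^ 2
      = 4 * A.re * B.re := by
  simp only [Complex.sq_abs, Complex.normSq_apply, Complex.add_re, Complex.add_im,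
    Complex.sub_re, Complex.sub_im, Complex.conj_re, Complex.conj_im]
  ring

/-- Key Schwarz-lemma consequence for Herglotz functions, with an `ε`-shift to
make the real part strictly positive. -/
lemma herglotz_key {f : ℂ → ℂ} (hf : DifferentiableOn ℂ f UD)
    (hre : ∀ u ∈ UD, 0 ≤ (f u).re) {w : ℂ} (hw : w ∈ UD) {ε : ℝ} (hε : 0 < ε) :
    Complex.abs (f w - f 0) ≤ Complex.abs w *
      Complex.abs ((f w + ε) + (starRingEnd ℂ) (f 0 + ε)) := by
  have h0 : (0:ℂ) ∈ UD := by simp [UD]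
  set d : ℂ → ℂ := fun u => (f u + ε) + (starRingEnd ℂ) (f 0 + ε) with hd
  have hdre : ∀ u ∈ UD, 0 < (d u).re := by
    intro u hu
    have h1 := hre u hu
    have h2 := hre 0 h0
    simp only [hd, Complex.add_re, Complex.conj_re, Complex.ofReal_re]
    nlinarith
  have hdne : ∀ u ∈ UD, d u ≠ 0 := by
    intro u hu h
    have := hdre u hu
    rw [h] at this; simp at this
  set F : ℂ → ℂ := fun u => (f u - f 0) / d u with hF
  have hFdiff : DifferentiableOn ℂ F UD := by
    apply DifferentiableOn.div
    · exact hf.sub (differentiableOn_const _)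
    · exact (hf.add (differentiableOn_const _)).add (differentiableOn_const _)
    · exact hdne
  have hF0 : F 0 = 0 := by simp [hF]
  have hmaps : Set.MapsTo F (Metric.ball (0:ℂ) 1) (Metric.ball (0:ℂ) 1) := by
    intro u hu
    rw [← UD_eq_ball] at hu
    have h1 : Complex.abs (f u - f 0) < Complex.abs (d u) := by
      have hiden := sq_abs_iden (f u + ε) (f 0 + ε)
      have h2 : (f u + ε) - (f 0 + ε) = f u - f 0 := by ring
      rw [h2] at hiden
      have h3 : 0 < ((f u : ℂ) + ε).re * ((f 0 : ℂ) + ε).re := by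
        have := hre u hu; have := hre 0 h0
        simp only [Complex.add_re, Complex.ofReal_re]
        nlinarith
      have h4 : Complex.abs (f u - f 0) ^ 2 < Complex.abs (d u) ^ 2 := by
        simp only [hd]; nlinarith
      exact lt_of_pow_lt_pow_left₀ 2 (Complex.abs.nonneg _) h4
    rw [Metric.mem_ball, Complex.dist_eq, sub_zero, hF]
    rw [Complex.norm_eq_abs, map_div₀]
    have hdpos : 0 < Complex.abs (d u) := Complex.abs.pos (hdne u hu)
    rw [div_lt_one hdpos]
    exact h1
  have hSchwarz := Complex.abs_le_abs_of_mapsTo_ball_self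
    (R := 1) (by rw [← UD_eq_ball]; exact hFdiff) hmaps hF0 (by exact hw)
  rw [hF] at hSchwarz
  simp only [map_div₀] at hSchwarz
  have hdpos : 0 < Complex.abs (d w) := Complex.abs.pos (hdne w hw)
  rw [div_le_iff₀ hdpos] at hSchwarz
  exact hSchwarz

lemma herglotz_abs_sub {f : ℂ → ℂ} (hf : DifferentiableOn ℂ f UD)
    (hre : ∀ u ∈ UD, 0 ≤ (f u).re) {w : ℂ} (hw : w ∈ UD) :
    (1 - Complex.abs w) * Complex.abs (f w - f 0)
      ≤ 2 * Complex.abs w * (f 0).re := by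
  have h0 : (0:ℂ) ∈ UD := by simp [UD]
  have key : ∀ ε : ℝ, 0 < ε →
      (1 - Complex.abs w) * Complex.abs (f w - f 0)
        ≤ 2 * Complex.abs w * ((f 0).re + ε) := by
    intro ε hε
    have hk := herglotz_key hf hre hw hε
    have hdle : Complex.abs ((f w + ε) + (starRingEnd ℂ) (f 0 + ε))
        ≤ Complex.abs (f w - f 0) + 2 * ((f 0).re + ε) := by
      have h2 : (f w + ε) + (starRingEnd ℂ) (f 0 + ε)
          = (f w - f 0) + (((f 0 + ε) : ℂ) + (starRingEnd ℂ) (f 0 + ε)) := by ring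
      rw [h2]
      refine (Complex.abs.add_le _ _).trans ?_
      have h3 : ((f 0 + ε) : ℂ) + (starRingEnd ℂ) (f 0 + ε)
          = ((2 * ((f 0).re + ε) : ℝ) : ℂ) := by
        rw [Complex.add_conj]
        push_cast
        simp [Complex.add_re]
      rw [h3, Complex.abs_ofReal]
      rw [_root_.abs_of_nonneg (by nlinarith [hre 0 h0] : (0:ℝ) ≤ 2 * ((f 0).re + ε))]
  
    have habsw : Complex.abs w < 1 := hw
    nlinarith [Complex.abs.nonneg w, Complex.abs.nonneg (f w - f 0), hk, hdle]
  refine le_of_forall_pos_le_add ?_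
  intro ε' hε'
  have hε : 0 < ε' / (2 * Complex.abs w + 1) := by positivity
  have := key _ hε
  have h2 : 2 * Complex.abs w * (ε' / (2 * Complex.abs w + 1)) ≤ ε' := by
    rw [mul_div_assoc']
    rw [div_le_iff₀ (by positivity)]
    nlinarith [Complex.abs.nonneg w]
  nlinarith

lemma herglotz_harnack {f : ℂ → ℂ} (hf : DifferentiableOn ℂ f UD)
    (hre : ∀ u ∈ UD, 0 ≤ (f u).re) {w : ℂ} (hw : w ∈ UD) :
    (1 - Complex.abs w) * (f 0).re ≤ (1 + Complex.abs w) * (f w).re := by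
  have h0 : (0:ℂ) ∈ UD := by simp [UD]
  have key : ∀ ε : ℝ, 0 < ε →
      (1 - Complex.abs w) * (f 0).re ≤ (1 + Complex.abs w) * (f w).re + 2*ε := by
    intro ε hε
    have hk := herglotz_key hf hre hw hε
    set r := Complex.abs w with hr
    have hr1 : r < 1 := hw
    have hr0 : 0 ≤ r := Complex.abs.nonneg w
    set x := (f w).re + ε
    set u := (f 0).re + ε
    set sI := (f w).im - (f 0).im
    have hx : 0 < x := by have := hre w hw; simp only [x]; linarith
    have hu : 0 < u := by have := hre 0 h0; simp only [u]; linarith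
    have hsq : (x - u)^2 + sI^2 ≤ r^2 * ((x + u)^2 + sI^2) := by
      have h1 : Complex.abs (f w - f 0)^2 = (x - u)^2 + sI^2 := by
        rw [Complex.sq_abs, Complex.normSq_apply]
        simp only [Complex.sub_re, Complex.sub_im, x, u, sI]
        ring
      have h2 : Complex.abs ((f w + ε) + (starRingEnd ℂ) (f 0 + ε))^2
          = (x + u)^2 + sI^2 := by
        rw [Complex.sq_abs, Complex.normSq_apply]
        simp only [Complex.add_re, Complex.add_im, Complex.conj_re, Complex.conj_im,
          Complex.ofReal_re, Complex.ofReal_im, x, u, sI]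
        ring
      calc (x - u)^2 + sI^2 = Complex.abs (f w - f 0)^2 := h1.symm
        _ ≤ (r * Complex.abs ((f w + ε) + (starRingEnd ℂ) (f 0 + ε)))^2 := by
            apply pow_le_pow_left₀ (Complex.abs.nonneg _) hk
        _ = r^2 * ((x + u)^2 + sI^2) := by rw [mul_pow, h2]
    have hsq2 : (x - u)^2 ≤ (r * (x + u))^2 := by
      nlinarith [mul_nonneg (by nlinarith : (0:ℝ) ≤ 1 - r^2) (sq_nonneg sI)]
    have habs : |x - u| ≤ r * (x + u) := by
      have := Real.sqrt_le_sqrt hsq2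
      rwa [Real.sqrt_sq_eq_abs, Real.sqrt_sq (by positivity)] at this
    have hux : u - x ≤ r * (x + u) := by
      have h6 : u - x ≤ |x - u| := by rw [abs_sub_comm]; exact le_abs_self _
      linarith
    simp only [x, u] at hux
    nlinarith
  refine le_of_forall_pos_le_add ?_
  intro ε' hε'
  have := key (ε'/2) (by positivity)
  linarith

set_option maxHeartbeats 1600000
/-- Chain/product rule identity for primitives of `L¹` functions, proved by
approximation by continuous functions. -/
lemma ftc_prod_exp {f₁ f₂ : ℝ → ℂ} {s T : ℝ} (hsT : s ≤ T) (z : ℂ)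
    (h₁ : IntegrableOn f₁ (Set.Ioc s T)) (h₂ : IntegrableOn f₂ (Set.Ioc s T)) :
    (z - ∫ ξ in s..T, f₁ ξ) * Complex.exp (∫ ξ in s..T, f₂ ξ) =
      z + ∫ ξ in s..T, Complex.exp (∫ η in s..ξ, f₂ η) *
        ((z - ∫ η in s..ξ, f₁ η) * f₂ ξ - f₁ ξ) := by
  set W : ℝ → ℂ := fun t => z - ∫ ξ in s..t, f₁ ξ with hW
  set Λ : ℝ → ℂ := fun t => ∫ ξ in s..t, f₂ ξ with hΛ
  set Φ : ℝ → ℂ := fun ξ => Complex.exp (Λ ξ) * (W ξ * f₂ ξ - f₁ ξ) with hΦ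
  -- basic integrability on subintervals
  have hint₁ : ∀ t ∈ Set.Icc s T, IntervalIntegrable f₁ volume s t := fun t ht =>
    (intervalIntegrable_iff_integrableOn_Ioc_of_le ht.1).2
      (h₁.mono_set (Set.Ioc_subset_Ioc le_rfl ht.2))
  have hint₂ : ∀ t ∈ Set.Icc s T, IntervalIntegrable f₂ volume s t := fun t ht =>
    (intervalIntegrable_iff_integrableOn_Ioc_of_le ht.1).2
      (h₂.mono_set (Set.Ioc_subset_Ioc le_rfl ht.2))
  set R₁ : ℝ := ∫ ξ in Set.Ioc s T, ‖f₁ ξ‖ with hR₁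
  set R₂ : ℝ := ∫ ξ in Set.Ioc s T, ‖f₂ ξ‖ with hR₂
  have hR₁0 : 0 ≤ R₁ := integral_nonneg fun _ => norm_nonneg _
  have hR₂0 : 0 ≤ R₂ := integral_nonneg fun _ => norm_nonneg _
  -- primitive bounds
  have hprim_bound : ∀ (f : ℝ → ℂ), IntegrableOn f (Set.Ioc s T) →
      ∀ t ∈ Set.Icc s T, ‖∫ ξ in s..t, f ξ‖ ≤ ∫ ξ in Set.Ioc s T, ‖f ξ‖ := by
    intro f hf t ht
    calc ‖∫ ξ in s..t, f ξ‖ ≤ ∫ ξ in Set.Ioc s t, ‖f ξ‖ := by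
          rw [← intervalIntegral.integral_of_le ht.1]
          exact intervalIntegral.norm_integral_le_integral_norm ht.1
      _ ≤ ∫ ξ in Set.Ioc s T, ‖f ξ‖ := by
          apply setIntegral_mono_set hf.norm
          · exact Filter.Eventually.of_forall fun _ => norm_nonneg _
          · exact HasSubset.Subset.eventuallyLE (Set.Ioc_subset_Ioc le_rfl ht.2)
  have bΛ : ∀ t ∈ Set.Icc s T, ‖Λ t‖ ≤ R₂ := fun t ht => hprim_bound f₂ h₂ t ht
  have bW : ∀ t ∈ Set.Icc s T, ‖W t‖ ≤ ‖z‖ + R₁ := by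
    intro t ht
    calc ‖W t‖ ≤ ‖z‖ + ‖∫ ξ in s..t, f₁ ξ‖ := norm_sub_le _ _
      _ ≤ ‖z‖ + R₁ := by linarith [hprim_bound f₁ h₁ t ht]
  set M : ℝ := ‖z‖ + R₁ + 1 with hM
  have hM1 : 1 ≤ M := by simp only [hM]; nlinarith [norm_nonneg z, hR₁0]
  set Eb : ℝ := Real.exp (R₂ + 1) with hEb
  have hEb0 : 0 < Eb := Real.exp_pos _
  have bE : ∀ t ∈ Set.Icc s T, ‖Complex.exp (Λ t)‖ ≤ Eb := by
    intro t ht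
    rw [Complex.norm_eq_abs, Complex.abs_exp]
    apply Real.exp_le_exp.2
    calc (Λ t).re ≤ Complex.abs (Λ t) := Complex.re_le_abs _
      _ ≤ R₂ := bΛ t ht
      _ ≤ R₂ + 1 := by linarith
  -- integrability of Φ
  have hWcont : ContinuousOn W (Set.Icc s T) := by
    apply continuousOn_const.sub
    have := intervalIntegral.continuousOn_primitive_interval
      (f := f₁) (μ := volume) (a := s) (b := T) ?_
    · rwa [Set.uIcc_of_le hsT] at this
    · rw [Set.uIcc_of_le hsT, integrableOn_Icc_iff_integrableOn_Ioc]
      exact h₁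
  have hΛcont : ContinuousOn Λ (Set.Icc s T) := by
    have := intervalIntegral.continuousOn_primitive_interval
      (f := f₂) (μ := volume) (a := s) (b := T) ?_
    · rwa [Set.uIcc_of_le hsT] at this
    · rw [Set.uIcc_of_le hsT, integrableOn_Icc_iff_integrableOn_Ioc]
      exact h₂
  have hmeasIoc : MeasurableSet (Set.Ioc s T) := measurableSet_Ioc
  have hEWaesm : AEStronglyMeasurable (fun ξ => Complex.exp (Λ ξ) * W ξ)
      (volume.restrict (Set.Ioc s T)) := by
    apply ContinuousOn.aestronglyMeasurable _ hmeasIoc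
    exact ((Complex.continuous_exp.comp_continuousOn
      (hΛcont.mono Set.Ioc_subset_Icc_self)).mul (hWcont.mono Set.Ioc_subset_Icc_self))
  have hEaesm : AEStronglyMeasurable (fun ξ => Complex.exp (Λ ξ))
      (volume.restrict (Set.Ioc s T)) := by
    apply ContinuousOn.aestronglyMeasurable _ hmeasIoc
    exact Complex.continuous_exp.comp_continuousOn (hΛcont.mono Set.Ioc_subset_Icc_self)
  have hΦint : IntegrableOn Φ (Set.Ioc s T) := by
    have haesm : AEStronglyMeasurable Φ (volume.restrict (Set.Ioc s T)) := by
      have : Φ = fun ξ => (Complex.exp (Λ ξ) * W ξ) * f₂ ξ - Complex.exp (Λ ξ) * f₁ ξ := by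
        funext ξ; simp only [Φ]; ring
      rw [this]
      exact ((hEWaesm.mul h₂.aestronglyMeasurable).sub (hEaesm.mul h₁.aestronglyMeasurable))
    apply Integrable.mono' ((h₂.norm.const_mul (Eb * M)).add (h₁.norm.const_mul Eb)) haesm
    · filter_upwards [ae_restrict_mem hmeasIoc] with ξ hξ
      have hξ' : ξ ∈ Set.Icc s T := Set.Ioc_subset_Icc_self hξ
      calc ‖Φ ξ‖ ≤ ‖Complex.exp (Λ ξ)‖ * (‖W ξ‖ * ‖f₂ ξ‖ + ‖f₁ ξ‖) := by
            rw [hΦ]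
            simp only [norm_mul]
            gcongr
            calc ‖W ξ * f₂ ξ - f₁ ξ‖ ≤ ‖W ξ * f₂ ξ‖ + ‖f₁ ξ‖ := norm_sub_le _ _
              _ = ‖W ξ‖ * ‖f₂ ξ‖ + ‖f₁ ξ‖ := by rw [norm_mul]
        _ ≤ Eb * (M * ‖f₂ ξ‖ + ‖f₁ ξ‖) := by
            apply mul_le_mul (bE ξ hξ') _ (by positivity) (le_of_lt hEb0)
            gcongr
            · calc ‖W ξ‖ ≤ ‖z‖ + R₁ := bW ξ hξ'
                _ ≤ M := by simp only [hM]; linarith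
        _ = Eb * M * ‖f₂ ξ‖ + Eb * ‖f₁ ξ‖ := by ring
  have hΦii : IntervalIntegrable Φ volume s T :=
    (intervalIntegrable_iff_integrableOn_Ioc_of_le hsT).2 hΦint
  -- constants
  set C : ℝ := Eb * (1 + 2*M) + (Eb*(2*M+1)*R₂ + 2*Eb*R₁ + Eb*M + Eb) with hCdef
  have hC0 : 0 ≤ C := by positivity
  have hTmem : T ∈ Set.Icc s T := ⟨hsT, le_rfl⟩
  -- key δ-approximation estimate
  have key : ∀ δ : ℝ, 0 < δ → δ ≤ 1 →
      ‖W T * Complex.exp (Λ T) - (z + ∫ ξ in s..T, Φ ξ)‖ ≤ C * δ := by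
    intro δ hδ0 hδ1
    have hF₁ : Integrable ((Set.Ioc s T).indicator f₁) volume :=
      (integrable_indicator_iff hmeasIoc).2 h₁
    have hF₂ : Integrable ((Set.Ioc s T).indicator f₂) volume :=
      (integrable_indicator_iff hmeasIoc).2 h₂
    obtain ⟨G₁, -, hG₁close, hG₁cont, hG₁int⟩ :=
      hF₁.exists_hasCompactSupport_integral_sub_le hδ0
    obtain ⟨G₂, -, hG₂close, hG₂cont, hG₂int⟩ :=
      hF₂.exists_hasCompactSupport_integral_sub_le hδ0
    -- L¹ closeness on `Ioc s T`
    have hclose : ∀ (f G : ℝ → ℂ), IntegrableOn f (Set.Ioc s T) → Integrable G volume →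
        ((∫ x, ‖(Set.Ioc s T).indicator f x - G x‖) ≤ δ) →
        (∫ ξ in Set.Ioc s T, ‖f ξ - G ξ‖) ≤ δ := by
      intro f G hf hG hcl
      have hind : Integrable ((Set.Ioc s T).indicator f) volume :=
        (integrable_indicator_iff hmeasIoc).2 hf
      have h1 : (∫ ξ in Set.Ioc s T, ‖f ξ - G ξ‖)
          = ∫ ξ in Set.Ioc s T, ‖(Set.Ioc s T).indicator f ξ - G ξ‖ := by
        apply setIntegral_congr_fun hmeasIoc
        intro ξ hξ
        simp [Set.indicator_of_mem hξ]
      rw [h1]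
      exact le_trans (setIntegral_le_integral (hind.sub hG).norm
        (Filter.Eventually.of_forall fun _ => norm_nonneg _)) hcl
    have hd₁ : (∫ ξ in Set.Ioc s T, ‖f₁ ξ - G₁ ξ‖) ≤ δ := hclose f₁ G₁ h₁ hG₁int hG₁close
    have hd₂ : (∫ ξ in Set.Ioc s T, ‖f₂ ξ - G₂ ξ‖) ≤ δ := hclose f₂ G₂ h₂ hG₂int hG₂close
    set Wδ : ℝ → ℂ := fun t => z - ∫ ξ in s..t, G₁ ξ with hWδdef
    set Λδ : ℝ → ℂ := fun t => ∫ ξ in s..t, G₂ ξ with hΛδdef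
    -- primitives are close
    have hprimclose : ∀ (f G : ℝ → ℂ), IntegrableOn f (Set.Ioc s T) → Continuous G →
        ((∫ ξ in Set.Ioc s T, ‖f ξ - G ξ‖) ≤ δ) →
        (∀ t ∈ Set.Icc s T, IntervalIntegrable f volume s t) →
        ∀ t ∈ Set.Icc s T, ‖(∫ ξ in s..t, f ξ) - ∫ ξ in s..t, G ξ‖ ≤ δ := by
      intro f G hf hG hcl hfii t ht
      have h1 : (∫ ξ in s..t, f ξ) - (∫ ξ in s..t, G ξ) = ∫ ξ in s..t, (f ξ - G ξ) :=
        (intervalIntegral.integral_sub (hfii t ht) (hG.intervalIntegrable _ _)).symm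
      rw [h1]
      calc ‖∫ ξ in s..t, (f ξ - G ξ)‖ ≤ ∫ ξ in Set.Ioc s t, ‖f ξ - G ξ‖ := by
            rw [← intervalIntegral.integral_of_le ht.1]
            exact intervalIntegral.norm_integral_le_integral_norm ht.1
        _ ≤ ∫ ξ in Set.Ioc s T, ‖f ξ - G ξ‖ := by
            have hGIoc : IntegrableOn G (Set.Ioc s T) :=
              (intervalIntegrable_iff_integrableOn_Ioc_of_le hsT).1 (hG.intervalIntegrable s T)
            apply setIntegral_mono_set ((hf.sub hGIoc).norm)
            · exact Filter.Eventually.of_forall fun _ => norm_nonneg _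
            · exact HasSubset.Subset.eventuallyLE (Set.Ioc_subset_Ioc le_rfl ht.2)
        _ ≤ δ := hcl
    have hWδclose : ∀ t ∈ Set.Icc s T, ‖W t - Wδ t‖ ≤ δ := by
      intro t ht
      have h1 : W t - Wδ t = -((∫ ξ in s..t, f₁ ξ) - ∫ ξ in s..t, G₁ ξ) := by
        simp only [hW, hWδdef]; ring
      rw [h1, norm_neg]
      exact hprimclose f₁ G₁ h₁ hG₁cont hd₁ hint₁ t ht
    have hΛδclose : ∀ t ∈ Set.Icc s T, ‖Λ t - Λδ t‖ ≤ δ :=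
      fun t ht => hprimclose f₂ G₂ h₂ hG₂cont hd₂ hint₂ t ht
    have hEδb : ∀ t ∈ Set.Icc s T, ‖Complex.exp (Λδ t)‖ ≤ Eb := by
      intro t ht
      rw [Complex.norm_eq_abs, Complex.abs_exp]
      apply Real.exp_le_exp.2
      calc (Λδ t).re ≤ Complex.abs (Λδ t) := Complex.re_le_abs _
        _ = ‖Λδ t‖ := rfl
        _ ≤ ‖Λ t‖ + ‖Λ t - Λδ t‖ := by
            have e : Λδ t = Λ t - (Λ t - Λδ t) := by ring
            calc ‖Λδ t‖ = ‖Λ t - (Λ t - Λδ t)‖ := by rw [← e]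
              _ ≤ ‖Λ t‖ + ‖Λ t - Λδ t‖ := norm_sub_le _ _
        _ ≤ R₂ + 1 := add_le_add (bΛ t ht) (le_trans (hΛδclose t ht) hδ1)
    have hEdiff : ∀ t ∈ Set.Icc s T, ‖Complex.exp (Λ t) - Complex.exp (Λδ t)‖ ≤ 2 * Eb * δ := by
      intro t ht
      have h1 : Complex.exp (Λ t) - Complex.exp (Λδ t)
          = Complex.exp (Λ t) * (1 - Complex.exp (Λδ t - Λ t)) := by
        rw [mul_sub, mul_one, ← Complex.exp_add]
        ring_nf
      rw [h1, norm_mul]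
      have h3 : Complex.abs (Λδ t - Λ t) ≤ δ := by
        rw [← Complex.norm_eq_abs, norm_sub_rev]
        exact hΛδclose t ht
      have h2 : ‖(1:ℂ) - Complex.exp (Λδ t - Λ t)‖ ≤ 2 * δ := by
        rw [norm_sub_rev]
        calc ‖Complex.exp (Λδ t - Λ t) - 1‖ ≤ 2 * Complex.abs (Λδ t - Λ t) :=
              Complex.abs_exp_sub_one_le (h3.trans hδ1)
          _ ≤ 2 * δ := by linarith
      calc ‖Complex.exp (Λ t)‖ * ‖(1:ℂ) - Complex.exp (Λδ t - Λ t)‖ ≤ Eb * (2 * δ) :=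
            mul_le_mul (bE t ht) h2 (norm_nonneg _) (le_of_lt hEb0)
        _ = 2 * Eb * δ := by ring
    have hWδb : ∀ t ∈ Set.Icc s T, ‖Wδ t‖ ≤ M := by
      intro t ht
      calc ‖Wδ t‖ ≤ ‖W t‖ + ‖W t - Wδ t‖ := by
            have e : Wδ t = W t - (W t - Wδ t) := by ring
            calc ‖Wδ t‖ = ‖W t - (W t - Wδ t)‖ := by rw [← e]
              _ ≤ ‖W t‖ + ‖W t - Wδ t‖ := norm_sub_le _ _
        _ ≤ (‖z‖ + R₁) + 1 := add_le_add (bW t ht) (le_trans (hWδclose t ht) hδ1)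
        _ = M := by rw [hM]
    -- FTC for the approximants
    have hprimδ₁ : ∀ t : ℝ, HasDerivAt (fun u => ∫ ξ in s..u, G₁ ξ) (G₁ t) t := fun t =>
      intervalIntegral.integral_hasDerivAt_right (hG₁cont.intervalIntegrable _ _)
        (hG₁cont.stronglyMeasurableAtFilter _ _) hG₁cont.continuousAt
    have hprimδ₂ : ∀ t : ℝ, HasDerivAt (fun u => ∫ ξ in s..u, G₂ ξ) (G₂ t) t := fun t =>
      intervalIntegral.integral_hasDerivAt_right (hG₂cont.intervalIntegrable _ _)
        (hG₂cont.stronglyMeasurableAtFilter _ _) hG₂cont.continuousAt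
    have hWδd : ∀ t : ℝ, HasDerivAt Wδ (-G₁ t) t := fun t => (hprimδ₁ t).const_sub z
    have hΛδd : ∀ t : ℝ, HasDerivAt Λδ (G₂ t) t := hprimδ₂
    set Φδ : ℝ → ℂ := fun ξ => Complex.exp (Λδ ξ) * (Wδ ξ * G₂ ξ - G₁ ξ) with hΦδdef
    have hFδd : ∀ t : ℝ, HasDerivAt (fun u => Wδ u * Complex.exp (Λδ u)) (Φδ t) t := by
      intro t
      have h := (hWδd t).mul ((hΛδd t).cexp)
      refine HasDerivAt.congr_deriv h ?_
      show _ = Complex.exp (Λδ t) * (Wδ t * G₂ t - G₁ t)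
      ring
    have hWδcont : Continuous Wδ := continuous_const.sub
      (intervalIntegral.continuous_primitive (fun a b => hG₁cont.intervalIntegrable a b) s)
    have hΛδcont : Continuous Λδ :=
      intervalIntegral.continuous_primitive (fun a b => hG₂cont.intervalIntegrable a b) s
    have hΦδcont : Continuous Φδ :=
      (Complex.continuous_exp.comp hΛδcont).mul ((hWδcont.mul hG₂cont).sub hG₁cont)
    have hFTCδ : ∫ ξ in s..T, Φδ ξ = Wδ T * Complex.exp (Λδ T) - z := by
      have h := intervalIntegral.integral_eq_sub_of_hasDerivAt
        (f := fun u => Wδ u * Complex.exp (Λδ u)) (f' := Φδ)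
        (fun t _ => hFδd t) (hΦδcont.intervalIntegrable s T)
      rw [h]
      show Wδ T * Complex.exp (Λδ T) - Wδ s * Complex.exp (Λδ s) = _
      have h1 : Wδ s = z := by simp [hWδdef]
      have h2 : Λδ s = 0 := by simp [hΛδdef]
      rw [h1, h2, Complex.exp_zero, mul_one]
    -- first difference
    have diff1 : ‖W T * Complex.exp (Λ T) - Wδ T * Complex.exp (Λδ T)‖
        ≤ Eb * (1 + 2*M) * δ := by
      have h1 : W T * Complex.exp (Λ T) - Wδ T * Complex.exp (Λδ T)
          = (W T - Wδ T) * Complex.exp (Λ T)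
            + Wδ T * (Complex.exp (Λ T) - Complex.exp (Λδ T)) := by ring
      rw [h1]
      calc ‖(W T - Wδ T) * Complex.exp (Λ T)
            + Wδ T * (Complex.exp (Λ T) - Complex.exp (Λδ T))‖
          ≤ ‖W T - Wδ T‖ * ‖Complex.exp (Λ T)‖
            + ‖Wδ T‖ * ‖Complex.exp (Λ T) - Complex.exp (Λδ T)‖ := by
            refine le_trans (norm_add_le _ _) ?_
            rw [norm_mul, norm_mul]
        _ ≤ δ * Eb + M * (2 * Eb * δ) := by
            apply add_le_add
            · exact mul_le_mul (hWδclose T hTmem) (bE T hTmem) (norm_nonneg _)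
                (le_of_lt hδ0)
            · exact mul_le_mul (hWδb T hTmem) (hEdiff T hTmem) (norm_nonneg _)
                (by linarith)
        _ = Eb * (1 + 2*M) * δ := by ring
    have hG₁Ioc : IntegrableOn G₁ (Set.Ioc s T) :=
      (intervalIntegrable_iff_integrableOn_Ioc_of_le hsT).1 (hG₁cont.intervalIntegrable s T)
    have hG₂Ioc : IntegrableOn G₂ (Set.Ioc s T) :=
      (intervalIntegrable_iff_integrableOn_Ioc_of_le hsT).1 (hG₂cont.intervalIntegrable s T)
    have iA : Integrable (fun ξ => (Eb*(2*M+1)*δ) * ‖f₂ ξ‖) (volume.restrict (Set.Ioc s T)) :=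
      h₂.norm.const_mul _
    have iB : Integrable (fun ξ => (2*Eb*δ) * ‖f₁ ξ‖) (volume.restrict (Set.Ioc s T)) :=
      h₁.norm.const_mul _
    have iC : Integrable (fun ξ => (Eb*M) * ‖f₂ ξ - G₂ ξ‖) (volume.restrict (Set.Ioc s T)) :=
      (h₂.sub hG₂Ioc).norm.const_mul _
    have iD : Integrable (fun ξ => Eb * ‖f₁ ξ - G₁ ξ‖) (volume.restrict (Set.Ioc s T)) :=
      (h₁.sub hG₁Ioc).norm.const_mul _
    have iAB : Integrable (fun ξ => (Eb*(2*M+1)*δ) * ‖f₂ ξ‖ + (2*Eb*δ) * ‖f₁ ξ‖)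
        (volume.restrict (Set.Ioc s T)) := iA.add iB
    have iABC : Integrable (fun ξ => (Eb*(2*M+1)*δ) * ‖f₂ ξ‖ + (2*Eb*δ) * ‖f₁ ξ‖
        + (Eb*M) * ‖f₂ ξ - G₂ ξ‖) (volume.restrict (Set.Ioc s T)) := iAB.add iC
    -- second difference
    have hΦδint : IntegrableOn Φδ (Set.Ioc s T) :=
      (intervalIntegrable_iff_integrableOn_Ioc_of_le hsT).1 (hΦδcont.intervalIntegrable s T)
    have diff2 : ‖(∫ ξ in s..T, Φδ ξ) - ∫ ξ in s..T, Φ ξ‖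
        ≤ (Eb*(2*M+1)*R₂ + 2*Eb*R₁ + Eb*M + Eb) * δ := by
      have h1 : (∫ ξ in s..T, Φδ ξ) - (∫ ξ in s..T, Φ ξ) = ∫ ξ in s..T, (Φδ ξ - Φ ξ) :=
        (intervalIntegral.integral_sub
          (hΦδcont.intervalIntegrable s T) hΦii).symm
      rw [h1]
      have hsub_int : IntegrableOn (fun ξ => Φδ ξ - Φ ξ) (Set.Ioc s T) := hΦδint.sub hΦint
      set dom2 : ℝ → ℝ := fun ξ => (Eb*(2*M+1)*δ) * ‖f₂ ξ‖ + (2*Eb*δ) * ‖f₁ ξ‖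
        + (Eb*M) * ‖f₂ ξ - G₂ ξ‖ + Eb * ‖f₁ ξ - G₁ ξ‖ with hdom2
      have hdom2_int : IntegrableOn dom2 (Set.Ioc s T) :=
        ((iA.add iB).add iC).add iD
      have hpt : ∀ ξ ∈ Set.Ioc s T, ‖Φδ ξ - Φ ξ‖ ≤ dom2 ξ := by
        intro ξ hξ
        have hξ' : ξ ∈ Set.Icc s T := Set.Ioc_subset_Icc_self hξ
        have hdec : Φδ ξ - Φ ξ = -((Complex.exp (Λ ξ) - Complex.exp (Λδ ξ))
              * (W ξ * f₂ ξ - f₁ ξ)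
            + Complex.exp (Λδ ξ) * ((W ξ - Wδ ξ) * f₂ ξ)
            + Complex.exp (Λδ ξ) * (Wδ ξ * (f₂ ξ - G₂ ξ))
            - Complex.exp (Λδ ξ) * (f₁ ξ - G₁ ξ)) := by
          show Complex.exp (Λδ ξ) * (Wδ ξ * G₂ ξ - G₁ ξ)
              - Complex.exp (Λ ξ) * (W ξ * f₂ ξ - f₁ ξ) = _
          generalize Complex.exp (Λδ ξ) = e1
          generalize Complex.exp (Λ ξ) = e2
          generalize W ξ = w1
          generalize Wδ ξ = w2
          ring
        rw [hdec, norm_neg]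
        have hWf : ‖W ξ * f₂ ξ - f₁ ξ‖ ≤ M * ‖f₂ ξ‖ + ‖f₁ ξ‖ := by
          have h5 : ‖W ξ‖ ≤ M := le_trans (bW ξ hξ') (by simp only [hM]; linarith)
          have h6 := norm_sub_le (W ξ * f₂ ξ) (f₁ ξ)
          rw [norm_mul] at h6
          nlinarith [norm_nonneg (f₂ ξ), norm_nonneg (f₁ ξ)]
        have t1 : ‖(Complex.exp (Λ ξ) - Complex.exp (Λδ ξ)) * (W ξ * f₂ ξ - f₁ ξ)‖
            ≤ (2*Eb*δ) * (M * ‖f₂ ξ‖ + ‖f₁ ξ‖) := by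
          rw [norm_mul]
          exact mul_le_mul (hEdiff ξ hξ') hWf (norm_nonneg _) (by positivity)
        have t2 : ‖Complex.exp (Λδ ξ) * ((W ξ - Wδ ξ) * f₂ ξ)‖ ≤ Eb * (δ * ‖f₂ ξ‖) := by
          rw [norm_mul, norm_mul]
          apply mul_le_mul (hEδb ξ hξ')
          · exact mul_le_mul_of_nonneg_right (hWδclose ξ hξ') (norm_nonneg _)
          · positivity
          · exact le_of_lt hEb0
        have t3 : ‖Complex.exp (Λδ ξ) * (Wδ ξ * (f₂ ξ - G₂ ξ))‖ ≤ Eb * (M * ‖f₂ ξ - G₂ ξ‖) := by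
          rw [norm_mul, norm_mul]
          apply mul_le_mul (hEδb ξ hξ')
          · exact mul_le_mul_of_nonneg_right (hWδb ξ hξ') (norm_nonneg _)
          · positivity
          · exact le_of_lt hEb0
        have t4 : ‖Complex.exp (Λδ ξ) * (f₁ ξ - G₁ ξ)‖ ≤ Eb * ‖f₁ ξ - G₁ ξ‖ := by
          rw [norm_mul]
          exact mul_le_mul_of_nonneg_right (hEδb ξ hξ') (norm_nonneg _)
        calc ‖(Complex.exp (Λ ξ) - Complex.exp (Λδ ξ)) * (W ξ * f₂ ξ - f₁ ξ)
              + Complex.exp (Λδ ξ) * ((W ξ - Wδ ξ) * f₂ ξ)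
              + Complex.exp (Λδ ξ) * (Wδ ξ * (f₂ ξ - G₂ ξ))
              - Complex.exp (Λδ ξ) * (f₁ ξ - G₁ ξ)‖
            ≤ ‖(Complex.exp (Λ ξ) - Complex.exp (Λδ ξ)) * (W ξ * f₂ ξ - f₁ ξ)‖
              + ‖Complex.exp (Λδ ξ) * ((W ξ - Wδ ξ) * f₂ ξ)‖
              + ‖Complex.exp (Λδ ξ) * (Wδ ξ * (f₂ ξ - G₂ ξ))‖
              + ‖Complex.exp (Λδ ξ) * (f₁ ξ - G₁ ξ)‖ := by
              refine le_trans (norm_sub_le _ _) ?_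
              have h7 := norm_add_le ((Complex.exp (Λ ξ) - Complex.exp (Λδ ξ))
                  * (W ξ * f₂ ξ - f₁ ξ)) (Complex.exp (Λδ ξ) * ((W ξ - Wδ ξ) * f₂ ξ))
              have h8 := norm_add_le ((Complex.exp (Λ ξ) - Complex.exp (Λδ ξ))
                  * (W ξ * f₂ ξ - f₁ ξ) + Complex.exp (Λδ ξ) * ((W ξ - Wδ ξ) * f₂ ξ))
                (Complex.exp (Λδ ξ) * (Wδ ξ * (f₂ ξ - G₂ ξ)))
              linarith
          _ ≤ (2*Eb*δ) * (M * ‖f₂ ξ‖ + ‖f₁ ξ‖) + Eb * (δ * ‖f₂ ξ‖)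
              + Eb * (M * ‖f₂ ξ - G₂ ξ‖) + Eb * ‖f₁ ξ - G₁ ξ‖ := by
              exact add_le_add (add_le_add (add_le_add t1 t2) t3) t4
          _ ≤ dom2 ξ := by simp only [hdom2]; nlinarith [norm_nonneg (f₂ ξ), norm_nonneg (f₁ ξ)]
      calc ‖∫ ξ in s..T, (Φδ ξ - Φ ξ)‖ ≤ ∫ ξ in Set.Ioc s T, ‖Φδ ξ - Φ ξ‖ := by
            rw [← intervalIntegral.integral_of_le hsT]
            exact intervalIntegral.norm_integral_le_integral_norm hsT
        _ ≤ ∫ ξ in Set.Ioc s T, dom2 ξ := setIntegral_mono_on hsub_int.norm hdom2_int hmeasIoc hpt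
        _ ≤ (Eb*(2*M+1)*R₂ + 2*Eb*R₁ + Eb*M + Eb) * δ := by
            have hsplit : (∫ ξ in Set.Ioc s T, dom2 ξ)
                = (Eb*(2*M+1)*δ) * R₂ + (2*Eb*δ) * R₁
                  + (Eb*M) * (∫ ξ in Set.Ioc s T, ‖f₂ ξ - G₂ ξ‖)
                  + Eb * (∫ ξ in Set.Ioc s T, ‖f₁ ξ - G₁ ξ‖) := by
              simp only [hdom2]
              rw [integral_add iABC iD, integral_add iAB iC,
                integral_add iA iB, integral_const_mul, integral_const_mul,
                integral_const_mul, integral_const_mul]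
            rw [hsplit]
            have hb3 : (Eb*M) * (∫ ξ in Set.Ioc s T, ‖f₂ ξ - G₂ ξ‖) ≤ (Eb*M) * δ := by
              apply mul_le_mul_of_nonneg_left hd₂ (by positivity)
            have hb4 : Eb * (∫ ξ in Set.Ioc s T, ‖f₁ ξ - G₁ ξ‖) ≤ Eb * δ := by
              apply mul_le_mul_of_nonneg_left hd₁ (le_of_lt hEb0)
            nlinarith [hR₁0, hR₂0]
    -- put everything together
    have hfinal : W T * Complex.exp (Λ T) - (z + ∫ ξ in s..T, Φ ξ)
        = (W T * Complex.exp (Λ T) - Wδ T * Complex.exp (Λδ T))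
          + ((∫ ξ in s..T, Φδ ξ) - ∫ ξ in s..T, Φ ξ) := by
      rw [hFTCδ]; ring
    rw [hfinal]
    calc ‖(W T * Complex.exp (Λ T) - Wδ T * Complex.exp (Λδ T))
          + ((∫ ξ in s..T, Φδ ξ) - ∫ ξ in s..T, Φ ξ)‖
        ≤ ‖W T * Complex.exp (Λ T) - Wδ T * Complex.exp (Λδ T)‖
          + ‖(∫ ξ in s..T, Φδ ξ) - ∫ ξ in s..T, Φ ξ‖ := norm_add_le _ _
      _ ≤ Eb * (1 + 2*M) * δ + (Eb*(2*M+1)*R₂ + 2*Eb*R₁ + Eb*M + Eb) * δ := by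
          exact add_le_add diff1 diff2
      _ = C * δ := by rw [hCdef]; ring
  -- conclude
  have hzero : ‖W T * Complex.exp (Λ T) - (z + ∫ ξ in s..T, Φ ξ)‖ ≤ 0 := by
    refine le_of_forall_pos_le_add ?_
    intro ε hε
    have hδ0 : 0 < min 1 (ε / (C+1)) := lt_min one_pos (by positivity)
    have hδ1 : min 1 (ε / (C+1)) ≤ 1 := min_le_left _ _
    calc ‖W T * Complex.exp (Λ T) - (z + ∫ ξ in s..T, Φ ξ)‖
        ≤ C * min 1 (ε / (C+1)) := key _ hδ0 hδ1
      _ ≤ C * (ε / (C+1)) := by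
          apply mul_le_mul_of_nonneg_left (min_le_right _ _) hC0
      _ ≤ ε := by
          rw [mul_div_assoc']
          rw [div_le_iff₀ (by positivity)]
          nlinarith
      _ = 0 + ε := (zero_add ε).symm
  have := le_antisymm hzero (norm_nonneg _)
  rw [norm_eq_zero, sub_eq_zero] at this
  exact this

/-- The right half-plane `ℍ = {w : Re w > 0}`. -/
def RHP : Set ℂ := {w : ℂ | 0 < w.re}

/-- An evolution family in the unit disk with common Denjoy-Wolff point `0`, i.e. a
solution family of the radial Loewner-type equation `dz/dt = −z·p(z,t)` with `p` a
generalized Herglotz function. -/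
structure EvolutionFamilyDisk0 where
  φ : ℝ → ℝ → ℂ → ℂ
  p : ℂ → ℝ → ℂ
  mapsTo : ∀ ⦃s t : ℝ⦄, 0 ≤ s → s ≤ t → Set.MapsTo (φ s t) UD UD
  holo : ∀ ⦃s t : ℝ⦄, 0 ≤ s → s ≤ t → DifferentiableOn ℂ (φ s t) UD
  id_eq : ∀ ⦃s : ℝ⦄, 0 ≤ s → ∀ z ∈ UD, φ s s z = z
  comp : ∀ ⦃s u t : ℝ⦄, 0 ≤ s → s ≤ u → u ≤ t → ∀ z ∈ UD,
    φ s t z = φ u t (φ s u z)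
  p_meas : ∀ z ∈ UD, Measurable (p z)
  p_holo : ∀ t : ℝ, 0 ≤ t → DifferentiableOn ℂ (fun z => p z t) UD
  p_re_nonneg : ∀ z ∈ UD, ∀ t : ℝ, 0 ≤ t → 0 ≤ (p z t).re
  G_bound : ∀ K : Set ℂ, K ⊆ UD → IsCompact K → ∀ T : ℝ, 0 < T →
    ∃ k : ℝ → ℝ, (∀ t, 0 ≤ k t) ∧ MeasureTheory.IntegrableOn k (Set.Icc 0 T) ∧
      ∀ z ∈ K, ∀ᵐ t ∂(MeasureTheory.volume.restrict (Set.Icc (0:ℝ) T)),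
        ‖z * p z t‖ ≤ k t
  integral_eq : ∀ ⦃s t : ℝ⦄, 0 ≤ s → s ≤ t → ∀ z ∈ UD,
    φ s t z = z - ∫ ξ in s..t, φ s ξ z * p (φ s ξ z) ξ

/-- The family is non-trivial if some `φ_{s,t}`, `s < t`, is not the identity of `𝔻`. -/
def EvolutionFamilyDisk0.Nontrivial (E : EvolutionFamilyDisk0) : Prop :=
  ∃ s t : ℝ, 0 ≤ s ∧ s < t ∧ ∃ z ∈ UD, E.φ s t z ≠ z

/-- The ω-limit (in `ℂ`) of the trajectory `t ↦ ψ_{s,t}(z)`. -/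
def omegaLimitDisk0 (E : EvolutionFamilyDisk0) (s : ℝ) (z : ℂ) : Set ℂ :=
  {q : ℂ | ∃ tn : ℕ → ℝ, Tendsto tn atTop atTop ∧
    Tendsto (fun n => E.φ s (tn n) z) atTop (𝓝 q)}

open intervalIntegral in
/-- Measurability in time of a Herglotz function along a continuous curve. -/
lemma aesm_p_comp (E : EvolutionFamilyDisk0) {w : ℝ → ℂ} {s T : ℝ} (hs : 0 ≤ s)
    (hw : Continuous w) (hmem : ∀ ξ, w ξ ∈ UD) :
    AEMeasurable (fun ξ => E.p (w ξ) ξ) (volume.restrict (Set.Ioc s T)) := by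
  classical
  set P : ℂ → ℝ → ℂ := fun b t => if b ∈ UD then E.p b t else 0 with hP
  have hPmeas : ∀ b, Measurable (P b) := by
    intro b
    by_cases h : b ∈ UD
    · simp only [hP, if_pos h]; exact E.p_meas b h
    · simp only [hP, if_neg h]; exact measurable_const
  have h0UD : (0:ℂ) ∈ UD := by simp [UD]
  set σ : ℕ → MeasureTheory.SimpleFunc ℝ ℂ :=
    fun n => MeasureTheory.SimpleFunc.approxOn w hw.measurable UD 0 h0UD n with hσ
  have hσmem : ∀ n ξ, σ n ξ ∈ UD := fun n ξ =>
    MeasureTheory.SimpleFunc.approxOn_mem hw.measurable h0UD n ξ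
  have hσtend : ∀ ξ, Tendsto (fun n => σ n ξ) atTop (𝓝 (w ξ)) := fun ξ =>
    MeasureTheory.SimpleFunc.tendsto_approxOn hw.measurable h0UD
      (subset_closure (hmem ξ))
  have hmeasn : ∀ n, Measurable (fun ξ => P (σ n ξ) ξ) := fun n =>
    MeasureTheory.SimpleFunc.measurable_bind (σ n) P hPmeas
  apply aemeasurable_of_tendsto_metrizable_ae atTop (fun n => (hmeasn n).aemeasurable)
  filter_upwards [ae_restrict_mem measurableSet_Ioc] with ξ hξ
  have hξ0 : (0:ℝ) ≤ ξ := le_trans hs (le_of_lt hξ.1)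
  have hcont : ContinuousAt (fun b => E.p b ξ) (w ξ) :=
    ((E.p_holo ξ hξ0).continuousOn.continuousAt (isOpen_UD.mem_nhds (hmem ξ)))
  have h1 : Tendsto (fun n => E.p (σ n ξ) ξ) atTop (𝓝 (E.p (w ξ) ξ)) :=
    (hcont.tendsto).comp (hσtend ξ)
  have h2 : (fun n => P (σ n ξ) ξ) = fun n => E.p (σ n ξ) ξ := by
    funext n
    simp only [hP, if_pos (hσmem n ξ)]
  rw [h2]
  exact h1

/-- Local integrability of `t ↦ p(0,t)`. -/
lemma p0_integrable (E : EvolutionFamilyDisk0) {z : ℂ} (hz : z ∈ UD) (hz0 : z ≠ 0)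
    (T : ℝ) : IntegrableOn (fun t => E.p 0 t) (Set.Icc 0 T) := by
  rcases le_or_gt T 0 with hT | hT
  · have hsub : Set.Icc (0:ℝ) T ⊆ {0} := by
      intro x hx
      simp only [Set.mem_singleton_iff]
      exact le_antisymm (le_trans hx.2 hT) hx.1
    have h0 : volume (Set.Icc (0:ℝ) T) = 0 :=
      measure_mono_null hsub (by simp)
    have h1 : volume.restrict (Set.Icc (0:ℝ) T) = 0 := Measure.restrict_eq_zero.2 h0
    rw [IntegrableOn, h1]
    exact integrable_zero_measure
  · obtain ⟨k, hk0, hkint, hkae⟩ := E.G_bound {z} (by simpa using hz)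
      isCompact_singleton T hT
    have hbz := hkae z rfl
    set r := Complex.abs z with hr
    have hr0 : 0 < r := Complex.abs.pos hz0
    have hr1 : r < 1 := hz
    have h0UD : (0:ℂ) ∈ UD := by simp [UD]
    have hpt : ∀ t : ℝ, 0 ≤ t → ((1-r)*(1-r)) * Complex.abs (E.p 0 t)
        ≤ ((1-r)*(1-r) + 2*r*(1+r)) * Complex.abs (E.p z t) := by
      intro t ht0
      have hH1 := herglotz_abs_sub (f := fun u => E.p u t) (E.p_holo t ht0)
        (fun u hu => E.p_re_nonneg u hu t ht0) hz
      have hH2 := herglotz_harnack (f := fun u => E.p u t) (E.p_holo t ht0)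
        (fun u hu => E.p_re_nonneg u hu t ht0) hz
      rw [← hr] at hH1 hH2
      have e1 : Complex.abs (E.p 0 t) ≤ Complex.abs (E.p z t)
          + Complex.abs (E.p z t - E.p 0 t) := by
        rw [← Complex.norm_eq_abs, ← Complex.norm_eq_abs, ← Complex.norm_eq_abs]
        have e2 : E.p 0 t = E.p z t - (E.p z t - E.p 0 t) := by ring
        conv_lhs => rw [e2]
        exact norm_sub_le _ _
      have e3 : (E.p z t).re ≤ Complex.abs (E.p z t) := Complex.re_le_abs _
      have e4 : 0 ≤ (E.p 0 t).re := E.p_re_nonneg 0 h0UD t ht0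
      have e5 : 0 ≤ Complex.abs (E.p z t - E.p 0 t) := Complex.abs.nonneg _
      have hrr : 0 < 1 - r := by linarith
      have q1 : (1-r)*(1-r)*Complex.abs (E.p 0 t)
          ≤ (1-r)*(1-r)*(Complex.abs (E.p z t) + Complex.abs (E.p z t - E.p 0 t)) :=
        mul_le_mul_of_nonneg_left e1 (by nlinarith)
      have q2 : (1-r)*((1-r)*Complex.abs (E.p z t - E.p 0 t)) ≤ (1-r)*(2*r*(E.p 0 t).re) :=
        mul_le_mul_of_nonneg_left hH1 (by linarith)
      have q3 : (2*r)*((1-r)*(E.p 0 t).re) ≤ (2*r)*((1+r)*(E.p z t).re) :=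
        mul_le_mul_of_nonneg_left hH2 (by linarith)
      have q4 : (2*r*(1+r))*(E.p z t).re ≤ (2*r*(1+r))*Complex.abs (E.p z t) :=
        mul_le_mul_of_nonneg_left e3 (by nlinarith)
      nlinarith [q1, q2, q3, q4]
    set C : ℝ := ((1-r)*(1-r) + 2*r*(1+r)) / (((1-r)*(1-r)) * r) with hC
    have hC0 : 0 < C := by
      apply div_pos
      · nlinarith [mul_pos (by linarith : (0:ℝ) < 1-r) (by linarith : (0:ℝ) < 1-r),
          mul_pos hr0 (by linarith : (0:ℝ) < 1+r)]
      · exact mul_pos (mul_pos (by linarith) (by linarith)) hr0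
    apply Integrable.mono' (hkint.const_mul C)
      ((E.p_meas 0 h0UD).aestronglyMeasurable)
    filter_upwards [hbz, ae_restrict_mem measurableSet_Icc] with t hbt hmem
    have ht0 : (0:ℝ) ≤ t := hmem.1
    have h1 : r * Complex.abs (E.p z t) ≤ k t := by
      have h1a := hbt
      rw [norm_mul] at h1a
      rw [hr]
      exact h1a
    have h2 := hpt t ht0
    rw [Complex.norm_eq_abs]
    rw [hC, div_mul_eq_mul_div, le_div_iff₀
      (by exact mul_pos (mul_pos (by linarith) (by linarith)) hr0)]
    nlinarith [mul_le_mul_of_nonneg_left h2 hr0.le,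
      mul_le_mul_of_nonneg_left h1
        (by nlinarith [mul_pos (by linarith : (0:ℝ) < 1-r) (by linarith : (0:ℝ) < 1-r),
          mul_pos hr0 (by linarith : (0:ℝ) < 1+r)] :
          (0:ℝ) ≤ (1-r)*(1-r) + 2*r*(1+r))]

/-- For an evolution family in `𝔻` with common Denjoy-Wolff point `0` and spectral
function `λ(t) = ∫₀^t p(0,ξ)dξ` with `L = lim Re λ(t) < +∞`: for each `z ≠ 0` in `𝔻` and
each `s ≥ 0` there is a real constant `c(s,z)` with `ω_A = e^{ic}·ω_λ`, where `ω_A` is the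
ω-limit of `t ↦ ψ_{s,t}(z)/|ψ_{s,t}(z)|` and `ω_λ` is the ω-limit of
`t ↦ exp(−i·Im λ(t))`. -/
theorem argument_omega_limit_rotation (E : EvolutionFamilyDisk0)
    (hL : ∃ L : ℝ, Tendsto
      (fun t : ℝ => (∫ ξ in (0:ℝ)..t, E.p 0 ξ).re) atTop (𝓝 L)) :
    ∀ z ∈ UD, z ≠ 0 → ∀ s : ℝ, 0 ≤ s → ∃ c : ℝ,
      {u : ℂ | ∃ tn : ℕ → ℝ, Tendsto tn atTop atTop ∧
        Tendsto (fun n =>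
          E.φ s (tn n) z / ((‖E.φ s (tn n) z‖ : ℝ) : ℂ))
          atTop (𝓝 u)} =
      (fun v : ℂ => Complex.exp (Complex.I * (c : ℂ)) * v) ''
        {v : ℂ | ∃ tn : ℕ → ℝ, Tendsto tn atTop atTop ∧
          Tendsto (fun n => Complex.exp
            (-(Complex.I) * (((∫ ξ in (0:ℝ)..(tn n), E.p 0 ξ).im : ℝ) : ℂ)))
            atTop (𝓝 v)} := by
  intro z hz hz0 s hs
  classical
  obtain ⟨L, hLconv⟩ := hL
  set lam : ℝ → ℂ := fun t => ∫ ξ in (0:ℝ)..t, E.p 0 ξ with hlamdef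
  set r : ℝ := Complex.abs z with hrdef
  have hr0 : 0 < r := Complex.abs.pos hz0
  have hr1 : r < 1 := hz
  have h0UD : (0:ℂ) ∈ UD := by simp [UD]
  -- local integrability of p(0, ·)
  have hp0int : ∀ T : ℝ, IntegrableOn (fun t => E.p 0 t) (Set.Icc 0 T) :=
    p0_integrable E hz hz0
  have hp0Ioc : ∀ a b : ℝ, 0 ≤ a → IntegrableOn (fun t => E.p 0 t) (Set.Ioc a b) := by
    intro a b ha
    apply (hp0int b).mono_set
    intro x hx
    exact ⟨le_trans ha (le_of_lt hx.1), hx.2⟩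
  have hp0ii : ∀ a b : ℝ, 0 ≤ a → a ≤ b → IntervalIntegrable (fun t => E.p 0 t) volume a b :=
    fun a b ha hab => (intervalIntegrable_iff_integrableOn_Ioc_of_le hab).2 (hp0Ioc a b ha)
  have hlam_add : ∀ a b : ℝ, 0 ≤ a → a ≤ b → lam b - lam a = ∫ ξ in a..b, E.p 0 ξ := by
    intro a b ha hab
    have h := intervalIntegral.integral_add_adjacent_intervals
      (hp0ii 0 a le_rfl ha) (hp0ii a b ha hab)
    simp only [hlamdef]
    rw [← h]
    ring
  have hre_int : ∀ a b : ℝ, (hab : a ≤ b) → (hi : IntegrableOn (fun t => E.p 0 t) (Set.Ioc a b)) →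
      (∫ ξ in a..b, E.p 0 ξ).re = ∫ ξ in Set.Ioc a b, (E.p 0 ξ).re := by
    intro a b hab hi
    rw [intervalIntegral.integral_of_le hab]
    have h := integral_re (𝕜 := ℂ) hi
    simp only [RCLike.re_to_complex] at h
    exact h.symm
  have hlam_mono : ∀ a b : ℝ, 0 ≤ a → a ≤ b → (lam a).re ≤ (lam b).re := by
    intro a b ha hab
    have h1 : (lam b).re - (lam a).re = (∫ ξ in a..b, E.p 0 ξ).re := by
      rw [← hlam_add a b ha hab]; simp [Complex.sub_re]
    have h2 : 0 ≤ (∫ ξ in a..b, E.p 0 ξ).re := by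
      rw [hre_int a b hab (hp0Ioc a b ha)]
      apply setIntegral_nonneg measurableSet_Ioc
      intro x hx
      exact E.p_re_nonneg 0 h0UD x (le_trans ha (le_of_lt hx.1))
    linarith
  have hlam_le : ∀ t : ℝ, 0 ≤ t → (lam t).re ≤ L := by
    intro t ht
    apply ge_of_tendsto hLconv
    filter_upwards [eventually_ge_atTop t] with u hu
    exact hlam_mono t u ht hu
  -- the trajectory
  set w : ℝ → ℂ := fun t => E.φ s t z with hwdef
  set g : ℝ → ℂ := fun ξ => w ξ * E.p (w ξ) ξ with hgdef
  have hw_eq : ∀ t, s ≤ t → w t = z - ∫ ξ in s..t, g ξ := by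
    intro t ht
    exact E.integral_eq hs ht z hz
  have hwUD : ∀ t, s ≤ t → w t ∈ UD := fun t ht => E.mapsTo hs ht hz
  -- the globally clamped Herglotz function along the trajectory
  set pwg : ℝ → ℂ := fun ξ => E.p (w (max ξ s)) ξ with hpwgdef
  set c1 : ℝ := 1 + 2*r/(1-r) with hc1def
  have h1r : 0 < 1 - r := by linarith
  have hc1pos : 0 < c1 := by
    have : 0 ≤ 2*r/(1-r) := div_nonneg (by linarith) (le_of_lt h1r)
    simp only [hc1def]
    linarith
  -- pointwise Herglotz bounds at points of modulus at most `r`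
  have hpbound : ∀ u : ℂ, u ∈ UD → Complex.abs u ≤ r → ∀ ξ : ℝ, 0 ≤ ξ →
      Complex.abs (E.p u ξ) ≤ c1 * Complex.abs (E.p 0 ξ) ∧
      Complex.abs (E.p u ξ - E.p 0 ξ) ≤ (2*r/(1-r)) * (E.p 0 ξ).re := by
    intro u hu hur ξ hξ0
    have hH := herglotz_abs_sub (f := fun v => E.p v ξ) (E.p_holo ξ hξ0)
      (fun v hv => E.p_re_nonneg v hv ξ hξ0) hu
    have hre0 : 0 ≤ (E.p 0 ξ).re := E.p_re_nonneg 0 h0UD ξ hξ0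
    have hreabs : (E.p 0 ξ).re ≤ Complex.abs (E.p 0 ξ) := Complex.re_le_abs _
    have ha0 : 0 ≤ Complex.abs u := Complex.abs.nonneg _
    have hd : Complex.abs (E.p u ξ - E.p 0 ξ) ≤ (2*r/(1-r)) * (E.p 0 ξ).re := by
      rw [div_mul_eq_mul_div, le_div_iff₀ h1r]
      nlinarith [Complex.abs.nonneg (E.p u ξ - E.p 0 ξ)]
    refine ⟨?_, hd⟩
    have htri : Complex.abs (E.p u ξ) ≤ Complex.abs (E.p 0 ξ)
        + Complex.abs (E.p u ξ - E.p 0 ξ) := by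
      rw [← Complex.norm_eq_abs, ← Complex.norm_eq_abs, ← Complex.norm_eq_abs]
      have e2 : E.p u ξ = E.p 0 ξ + (E.p u ξ - E.p 0 ξ) := by ring
      conv_lhs => rw [e2]
      exact norm_add_le _ _
    have hmon : (2*r/(1-r)) * (E.p 0 ξ).re ≤ (2*r/(1-r)) * Complex.abs (E.p 0 ξ) :=
      mul_le_mul_of_nonneg_left hreabs (div_nonneg (by linarith) (le_of_lt h1r))
    simp only [hc1def]
    nlinarith
  set GoodP : ℝ → Prop := fun T => IntegrableOn g (Set.Ioc s T) volume with hGooddef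
  have hGmono : ∀ T T' : ℝ, GoodP T' → T ≤ T' → GoodP T := by
    intro T T' h hTT'
    exact h.mono_set (Set.Ioc_subset_Ioc le_rfl hTT')
  have hGoods : GoodP s := by
    simp only [hGooddef, Set.Ioc_self]
    exact integrableOn_empty
  -- the bootstrap package
  have pack : ∀ T, s ≤ T → GoodP T → ContinuousOn w (Set.Icc s T) ∧
      ∀ t ∈ Set.Icc s T, IntegrableOn pwg (Set.Ioc s t) ∧
        w t = z * Complex.exp (-(∫ ξ in s..t, pwg ξ)) ∧ Complex.abs (w t) ≤ r := by
    intro T hsT hGT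
    have hgii : ∀ t ∈ Set.Icc s T, IntervalIntegrable g volume s t := fun t ht =>
      (intervalIntegrable_iff_integrableOn_Ioc_of_le ht.1).2
        (hGT.mono_set (Set.Ioc_subset_Ioc le_rfl ht.2))
    have hwcont : ContinuousOn w (Set.Icc s T) := by
      have hIcc : IntegrableOn g (Set.uIcc s T) := by
        rw [Set.uIcc_of_le hsT, integrableOn_Icc_iff_integrableOn_Ioc]
        exact hGT
      have hcont0 := intervalIntegral.continuousOn_primitive_interval
        (a := s) (b := T) (μ := volume) hIcc
      rw [Set.uIcc_of_le hsT] at hcont0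
      apply ContinuousOn.congr (continuousOn_const.sub hcont0)
      intro t ht
      exact hw_eq t ht.1
    refine ⟨hwcont, ?_⟩
    set wb : ℝ → ℂ := fun ξ => w (min (max ξ s) T) with hwbdef
    have hclampmem : ∀ ξ : ℝ, min (max ξ s) T ∈ Set.Icc s T := by
      intro ξ
      exact ⟨le_min (le_max_right ξ s) hsT, min_le_right _ _⟩
    have hwbcont : Continuous wb := by
      apply hwcont.comp_continuous
      · exact (continuous_id.max continuous_const).min continuous_const
      · exact hclampmem
    have hwbUD : ∀ ξ, wb ξ ∈ UD := fun ξ => hwUD _ (hclampmem ξ).1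
    have hwbeq : ∀ ξ ∈ Set.Icc s T, wb ξ = w ξ := by
      intro ξ hξ
      simp only [hwbdef]
      rw [max_eq_left hξ.1, min_eq_left hξ.2]
    obtain ⟨ξ₀, hξ₀mem, hξ₀max⟩ := IsCompact.exists_isMaxOn isCompact_Icc
      (Set.nonempty_Icc.2 hsT) (Complex.continuous_abs.comp_continuousOn hwcont)
    set r' : ℝ := Complex.abs (w ξ₀) with hr'def
    have hr'1 : r' < 1 := hwUD ξ₀ hξ₀mem.1
    have hr'max : ∀ t ∈ Set.Icc s T, Complex.abs (w t) ≤ r' := hξ₀max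
    have hr'0 : 0 ≤ r' := Complex.abs.nonneg _
    set pw : ℝ → ℂ := fun ξ => E.p (wb ξ) ξ with hpwdef
    have hpwaesm : ∀ t : ℝ, AEStronglyMeasurable pw (volume.restrict (Set.Ioc s t)) :=
      fun t => (aesm_p_comp E hs hwbcont hwbUD).aestronglyMeasurable
    have hpwb : ∀ ξ ∈ Set.Icc s T, Complex.abs (pw ξ)
        ≤ (1 + 2*r'/(1-r')) * Complex.abs (E.p 0 ξ) := by
      intro ξ hξ
      have hξ0 : (0:ℝ) ≤ ξ := le_trans hs hξ.1
      have hH := herglotz_abs_sub (f := fun u => E.p u ξ) (E.p_holo ξ hξ0)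
        (fun u hu => E.p_re_nonneg u hu ξ hξ0) (hwbUD ξ)
      have habswb : Complex.abs (wb ξ) ≤ r' := by
        rw [hwbeq ξ hξ]; exact hr'max ξ hξ
      have hre0 : 0 ≤ (E.p 0 ξ).re := E.p_re_nonneg 0 h0UD ξ hξ0
      have hreabs : (E.p 0 ξ).re ≤ Complex.abs (E.p 0 ξ) := Complex.re_le_abs _
      have h1r' : 0 < 1 - r' := by linarith
      have hd : Complex.abs (pw ξ - E.p 0 ξ) ≤ (2*r'/(1-r')) * (E.p 0 ξ).re := by
        rw [div_mul_eq_mul_div, le_div_iff₀ h1r']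
        nlinarith [Complex.abs.nonneg (pw ξ - E.p 0 ξ), Complex.abs.nonneg (wb ξ),
          Complex.abs.nonneg (E.p (wb ξ) ξ - E.p 0 ξ)]
      have htri : Complex.abs (pw ξ) ≤ Complex.abs (E.p 0 ξ)
          + Complex.abs (pw ξ - E.p 0 ξ) := by
        rw [← Complex.norm_eq_abs, ← Complex.norm_eq_abs, ← Complex.norm_eq_abs]
        have e2 : pw ξ = E.p 0 ξ + (pw ξ - E.p 0 ξ) := by ring
        conv_lhs => rw [e2]
        exact norm_add_le _ _
      have hmon : (2*r'/(1-r')) * (E.p 0 ξ).re ≤ (2*r'/(1-r')) * Complex.abs (E.p 0 ξ) :=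
        mul_le_mul_of_nonneg_left hreabs (div_nonneg (by linarith) (le_of_lt h1r'))
      linarith
    have hpwint : ∀ t ∈ Set.Icc s T, IntegrableOn pw (Set.Ioc s t) := by
      intro t ht
      apply Integrable.mono' ((hp0Ioc s t hs).norm.const_mul (1 + 2*r'/(1-r')))
        (hpwaesm t)
      filter_upwards [ae_restrict_mem measurableSet_Ioc] with ξ hξ
      have hξ' : ξ ∈ Set.Icc s T := ⟨le_of_lt hξ.1, le_trans hξ.2 ht.2⟩
      rw [Complex.norm_eq_abs, Complex.norm_eq_abs]
      exact hpwb ξ hξ'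
    have hrep : ∀ t ∈ Set.Icc s T, w t = z * Complex.exp (-(∫ ξ in s..t, pw ξ)) := by
      intro t ht
      have hkey := ftc_prod_exp ht.1 z
        (hGT.mono_set (Set.Ioc_subset_Ioc le_rfl ht.2)) (hpwint t ht)
      have hzero : (∫ ξ in s..t, Complex.exp (∫ η in s..ξ, pw η) *
          ((z - ∫ η in s..ξ, g η) * pw ξ - g ξ)) = 0 := by
        rw [intervalIntegral.integral_congr (g := fun _ => (0:ℂ))]
        · simp
        · intro ξ hξ
          rw [Set.uIcc_of_le ht.1] at hξ
          have hξmem : ξ ∈ Set.Icc s T := ⟨hξ.1, le_trans hξ.2 ht.2⟩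
          have h1 : (∫ η in s..ξ, g η) = z - w ξ := by
            rw [hw_eq ξ hξ.1]; ring
          have h2 : pw ξ = E.p (w ξ) ξ := by
            simp only [hpwdef]; rw [hwbeq ξ hξmem]
          simp only [h1, h2]; simp only [hgdef]
          ring
      rw [hzero, add_zero] at hkey
      have hwt : (∫ ξ in s..t, g ξ) = z - w t := by
        rw [hw_eq t ht.1]; ring
      rw [hwt] at hkey
      have h3 : z - (z - w t) = w t := by ring
      rw [h3] at hkey
      rw [← hkey, Complex.exp_neg]
      have hne := Complex.exp_ne_zero (∫ ξ in s..t, pw ξ)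
      field_simp
    have habs : ∀ t ∈ Set.Icc s T, Complex.abs (w t) ≤ r := by
      intro t ht
      rw [hrep t ht, map_mul, Complex.abs_exp]
      have hre : 0 ≤ (∫ ξ in s..t, pw ξ).re := by
        have h1 : (∫ ξ in s..t, pw ξ).re = ∫ ξ in Set.Ioc s t, (pw ξ).re := by
          rw [intervalIntegral.integral_of_le ht.1]
          have h := integral_re (𝕜 := ℂ) (hpwint t ht)
          simp only [RCLike.re_to_complex] at h
          exact h.symm
        rw [h1]
        apply setIntegral_nonneg measurableSet_Ioc
        intro x hx
        exact E.p_re_nonneg (wb x) (hwbUD x) x (le_trans hs (le_of_lt hx.1))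
      have hexple : Real.exp ((-(∫ ξ in s..t, pw ξ)).re) ≤ 1 := by
        rw [Real.exp_le_one_iff]
        simp only [Complex.neg_re]
        linarith
      calc Complex.abs z * Real.exp ((-(∫ ξ in s..t, pw ξ)).re) ≤ Complex.abs z * 1 :=
            mul_le_mul_of_nonneg_left hexple (Complex.abs.nonneg z)
        _ = r := by rw [mul_one, hrdef]
    intro t ht
    have hpweq : Set.EqOn pw pwg (Set.Icc s T) := by
      intro ξ hξ
      simp only [hpwdef, hpwgdef, hwbdef]
      rw [max_eq_left hξ.1, min_eq_left hξ.2]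
    have hinteq : (∫ ξ in s..t, pw ξ) = ∫ ξ in s..t, pwg ξ := by
      apply intervalIntegral.integral_congr
      intro ξ hξ
      rw [Set.uIcc_of_le ht.1] at hξ
      exact hpweq ⟨hξ.1, le_trans hξ.2 ht.2⟩
    refine ⟨?_, ?_, habs t ht⟩
    · apply (hpwint t ht).congr_fun ?_ measurableSet_Ioc
      intro ξ hξ
      exact hpweq ⟨le_of_lt hξ.1, le_trans hξ.2 ht.2⟩
    · rw [hrep t ht, hinteq]

  -- no blow-up of integrability: `GoodP` holds for all times
  have hall : ∀ T, s ≤ T → GoodP T := by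
    by_contra hcon
    push_neg at hcon
    obtain ⟨T₀, hT₀s, hT₀bad⟩ := hcon
    set B : Set ℝ := {T | s ≤ T ∧ GoodP T} with hBdef
    have hBne : B.Nonempty := ⟨s, le_rfl, hGoods⟩
    have hBbdd : BddAbove B := by
      refine ⟨T₀, ?_⟩
      intro T hT
      by_contra hTgt
      push_neg at hTgt
      exact hT₀bad (hGmono T₀ T hT.2 (le_of_lt hTgt))
    set Tb : ℝ := sSup B with hTbdef
    have hsTb : s ≤ Tb := le_csSup hBbdd ⟨le_rfl, hGoods⟩
    have hbelow : ∀ T, s ≤ T → T < Tb → GoodP T := by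
      intro T hTs hTlt
      obtain ⟨T', hT', hTT'⟩ := exists_lt_of_lt_csSup hBne hTlt
      exact hGmono T T' hT'.2 (le_of_lt hTT')
    have habove : ∀ t, Tb < t → ¬ GoodP t := by
      intro t hlt hGt
      have : t ≤ Tb := le_csSup hBbdd ⟨le_trans hsTb (le_of_lt hlt), hGt⟩
      linarith
    have hwz : ∀ t, Tb < t → w t = z := by
      intro t hlt
      have hst : s ≤ t := le_trans hsTb (le_of_lt hlt)
      have hnint : ¬ IntervalIntegrable g volume s t := by
        intro hint
        exact habove t hlt ((intervalIntegrable_iff_integrableOn_Ioc_of_le hst).1 hint)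
      rw [hw_eq t hst, intervalIntegral.integral_undef hnint, sub_zero]
    have hGoodTb : GoodP Tb := by
      rcases eq_or_lt_of_le hsTb with heq | hlt
      · rw [← heq]; exact hGoods
      · set u : ℕ → ℝ := fun n => Tb - (Tb - s)/(n+1) with hudef
        have hu_lt : ∀ n : ℕ, u n < Tb := by
          intro n
          have h2 : 0 < (Tb - s)/((n:ℝ)+1) := div_pos (by linarith) (by positivity)
          simp only [hudef]
          linarith
        have hu_ge : ∀ n : ℕ, s ≤ u n := by
          intro n
          have h2 : (Tb - s)/((n:ℝ)+1) ≤ (Tb - s) := by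
            rw [div_le_iff₀ (by positivity)]
            nlinarith [Nat.cast_nonneg (α := ℝ) n, sub_nonneg.2 (le_of_lt hlt)]
          simp only [hudef]
          linarith
        have hcover : Set.Ioo s Tb ⊆ ⋃ n : ℕ, Set.Ioc s (u n) := by
          intro x hx
          have hx2 : 0 < Tb - x := by linarith [hx.2]
          obtain ⟨n, hn⟩ := exists_nat_gt ((Tb - s)/(Tb - x))
          refine Set.mem_iUnion.2 ⟨n, hx.1, ?_⟩
          have hn1 : (Tb - s)/(Tb - x) < (n:ℝ) + 1 := by linarith
          have h3 : Tb - s < ((n:ℝ)+1) * (Tb - x) := (div_lt_iff₀ hx2).1 hn1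
          have h4 : (Tb - s)/((n:ℝ)+1) < Tb - x := by
            rw [div_lt_iff₀ (by positivity)]
            nlinarith
          simp only [hudef]
          linarith
        have hIoo_Ioc : (Set.Ioo s Tb : Set ℝ) =ᵐ[volume] Set.Ioc s Tb := Ioo_ae_eq_Ioc
        have hrs : volume.restrict (Set.Ioc s Tb) = volume.restrict (Set.Ioo s Tb) :=
          (Measure.restrict_congr_set hIoo_Ioc).symm
        have haesm : AEStronglyMeasurable g (volume.restrict (Set.Ioc s Tb)) := by
          rw [hrs]
          have h5 : AEStronglyMeasurable g (volume.restrict (⋃ n : ℕ, Set.Ioc s (u n))) := by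
            rw [aestronglyMeasurable_iUnion_iff]
            intro n
            exact (hbelow (u n) (hu_ge n) (hu_lt n)).aestronglyMeasurable
          exact h5.mono_measure (Measure.restrict_mono hcover le_rfl)
        apply Integrable.mono' ((hp0Ioc s Tb hs).norm.const_mul c1) haesm
        rw [hrs]
        filter_upwards [ae_restrict_mem measurableSet_Ioo] with ξ hξ
        have hsξ : s ≤ ξ := le_of_lt hξ.1
        have hGξ : GoodP ξ := hbelow ξ hsξ hξ.2
        have hpk := (pack ξ hsξ hGξ).2 ξ ⟨hsξ, le_rfl⟩
        have hb1 := (hpbound (w ξ) (hwUD ξ hsξ) hpk.2.2 ξ (le_trans hs hsξ)).1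
        have hb2 : Complex.abs (w ξ) ≤ 1 := le_trans hpk.2.2 (le_of_lt hr1)
        simp only [hgdef]
        rw [Complex.norm_eq_abs, map_mul, Complex.norm_eq_abs]
        calc Complex.abs (w ξ) * Complex.abs (E.p (w ξ) ξ)
            ≤ 1 * Complex.abs (E.p (w ξ) ξ) :=
              mul_le_mul_of_nonneg_right hb2 (Complex.abs.nonneg _)
          _ = Complex.abs (E.p (w ξ) ξ) := one_mul _
          _ ≤ c1 * Complex.abs (E.p 0 ξ) := hb1
    have hGfin : GoodP (Tb + 1) := by
      have h1 : IntegrableOn g (Set.Ioc Tb (Tb+1)) := by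
        have hzp : IntegrableOn (fun ξ => z * E.p z ξ) (Set.Ioc Tb (Tb+1)) := by
          obtain ⟨k, hk0, hkint, hkae⟩ := E.G_bound {z} (by simpa using hz)
            isCompact_singleton (Tb+1) (by linarith [le_trans hs hsTb])
          have hsub : Set.Ioc Tb (Tb+1) ⊆ Set.Icc 0 (Tb+1) := by
            intro x hx
            exact ⟨le_trans (le_trans hs hsTb) (le_of_lt hx.1), hx.2⟩
          apply Integrable.mono' (hkint.mono_set hsub)
            (((E.p_meas z hz).const_mul z).aestronglyMeasurable)
          filter_upwards [ae_restrict_of_ae_restrict_of_subset hsub (hkae z rfl)] with ξ hξ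
          rw [Complex.norm_eq_abs]
          exact hξ
        apply hzp.congr_fun ?_ measurableSet_Ioc
        intro ξ hξ
        simp only [hgdef]
        rw [hwz ξ hξ.1]
      have h2 := hGoodTb.union h1
      rw [Set.Ioc_union_Ioc_eq_Ioc hsTb (by linarith)] at h2
      exact h2
    exact habove (Tb+1) (by linarith) hGfin
  -- global consequences
  have hrepall : ∀ t, s ≤ t → IntegrableOn pwg (Set.Ioc s t) ∧
      w t = z * Complex.exp (-(∫ ξ in s..t, pwg ξ)) ∧ Complex.abs (w t) ≤ r := by
    intro t ht
    exact (pack t ht (hall t ht)).2 t ⟨ht, le_rfl⟩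
  have hwne : ∀ t, s ≤ t → w t ≠ 0 := by
    intro t ht
    rw [(hrepall t ht).2.1]
    exact mul_ne_zero hz0 (Complex.exp_ne_zero _)
  -- the difference integral and its convergence
  set D : ℝ → ℂ := fun t => ∫ ξ in s..t, (pwg ξ - E.p 0 ξ) with hDdef
  have hdiffb : ∀ ξ : ℝ, s ≤ ξ → Complex.abs (pwg ξ - E.p 0 ξ)
      ≤ (2*r/(1-r)) * (E.p 0 ξ).re := by
    intro ξ hξ
    have hmax : max ξ s = ξ := max_eq_left hξ
    have h1 : pwg ξ = E.p (w ξ) ξ := by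
      simp only [hpwgdef, hmax]
    rw [h1]
    exact (hpbound (w ξ) (hwUD ξ hξ) (hrepall ξ hξ).2.2 ξ (le_trans hs hξ)).2
  have hpwgIoc : ∀ a b : ℝ, s ≤ a → IntegrableOn pwg (Set.Ioc a b) := by
    intro a b ha
    rcases le_or_gt a b with hab | hab
    · exact ((hrepall b (le_trans ha hab)).1).mono_set
        (Set.Ioc_subset_Ioc ha le_rfl)
    · simp [Set.Ioc_eq_empty (not_lt.2 (le_of_lt hab))]
  set c2 : ℝ := 2*r/(1-r) with hc2def
  have hc2nn : 0 ≤ c2 := div_nonneg (by linarith) (le_of_lt h1r)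
  have hdiffint : ∀ a b : ℝ, s ≤ a → IntegrableOn (fun ξ => pwg ξ - E.p 0 ξ) (Set.Ioc a b) :=
    fun a b ha => (hpwgIoc a b ha).sub (hp0Ioc a b (le_trans hs ha))
  have hdiffii : ∀ a b : ℝ, s ≤ a → a ≤ b →
      IntervalIntegrable (fun ξ => pwg ξ - E.p 0 ξ) volume a b :=
    fun a b ha hab => (intervalIntegrable_iff_integrableOn_Ioc_of_le hab).2 (hdiffint a b ha)
  have hreint : ∀ a b : ℝ, s ≤ a → IntegrableOn (fun ξ => (E.p 0 ξ).re) (Set.Ioc a b) := by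
    intro a b ha
    apply Integrable.mono' (hp0Ioc a b (le_trans hs ha)).norm
      ((Complex.measurable_re.comp (E.p_meas 0 h0UD)).aestronglyMeasurable)
    filter_upwards with ξ
    rw [Real.norm_eq_abs, Complex.norm_eq_abs]
    exact Complex.abs_re_le_abs _
  have hDadd : ∀ a b : ℝ, s ≤ a → a ≤ b →
      D b - D a = ∫ ξ in a..b, (pwg ξ - E.p 0 ξ) := by
    intro a b ha hab
    have h := intervalIntegral.integral_add_adjacent_intervals
      (hdiffii s a le_rfl ha) (hdiffii a b ha hab)
    simp only [hDdef]
    rw [← h]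
    ring
  have hDest : ∀ a b : ℝ, s ≤ a → a ≤ b →
      ‖D b - D a‖ ≤ c2 * ((lam b).re - (lam a).re) := by
    intro a b ha hab
    rw [hDadd a b ha hab]
    calc ‖∫ ξ in a..b, (pwg ξ - E.p 0 ξ)‖
        ≤ ∫ ξ in Set.Ioc a b, ‖pwg ξ - E.p 0 ξ‖ := by
          rw [← intervalIntegral.integral_of_le hab]
          exact intervalIntegral.norm_integral_le_integral_norm hab
      _ ≤ ∫ ξ in Set.Ioc a b, c2 * (E.p 0 ξ).re := by
          apply setIntegral_mono_on (hdiffint a b ha).norm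
            ((hreint a b ha).const_mul c2) measurableSet_Ioc
          intro ξ hξ
          rw [Complex.norm_eq_abs]
          exact hdiffb ξ (le_trans ha (le_of_lt hξ.1))
      _ = c2 * ((lam b).re - (lam a).re) := by
          rw [integral_const_mul]
          congr 1
          rw [← hre_int a b hab (hp0Ioc a b (le_trans hs ha)), ← hlam_add a b (le_trans hs ha) hab]
          simp [Complex.sub_re]
  have hDcauchy : CauchySeq (fun t : ℝ => D (max t s)) := by
    apply cauchySeq_of_le_tendsto_0 (b := fun N => c2 * (L - (lam (max N s)).re))
    · intro m n N hNm hNn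
      rcases le_total (max m s) (max n s) with hmn | hmn
      · have h1 := hDest (max m s) (max n s) (le_max_right m s) hmn
        rw [dist_eq_norm, norm_sub_rev]
        calc ‖D (max n s) - D (max m s)‖ ≤ c2 * ((lam (max n s)).re - (lam (max m s)).re) := h1
          _ ≤ c2 * (L - (lam (max N s)).re) := by
              apply mul_le_mul_of_nonneg_left _ hc2nn
              have h2 : (lam (max n s)).re ≤ L := hlam_le _ (le_trans hs (le_max_right n s))
              have h3 : (lam (max N s)).re ≤ (lam (max m s)).re :=
                hlam_mono _ _ (le_trans hs (le_max_right N s)) (max_le_max hNm le_rfl)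
              linarith
      · have h1 := hDest (max n s) (max m s) (le_max_right n s) hmn
        rw [dist_eq_norm]
        calc ‖D (max m s) - D (max n s)‖ ≤ c2 * ((lam (max m s)).re - (lam (max n s)).re) := h1
          _ ≤ c2 * (L - (lam (max N s)).re) := by
              apply mul_le_mul_of_nonneg_left _ hc2nn
              have h2 : (lam (max m s)).re ≤ L := hlam_le _ (le_trans hs (le_max_right m s))
              have h3 : (lam (max N s)).re ≤ (lam (max n s)).re :=
                hlam_mono _ _ (le_trans hs (le_max_right N s)) (max_le_max hNn le_rfl)
              linarith
    · have h1 : Tendsto (fun N : ℝ => max N s) atTop atTop :=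
        tendsto_atTop_mono (fun N => le_max_left N s) tendsto_id
      have h2 : Tendsto (fun N : ℝ => (lam (max N s)).re) atTop (𝓝 L) := by
        have := hLconv.comp h1
        exact this
      have h3 : Tendsto (fun N : ℝ => c2 * (L - (lam (max N s)).re)) atTop (𝓝 (c2 * (L - L))) :=
        (tendsto_const_nhds.sub h2).const_mul c2
      simpa using h3
  obtain ⟨Dinf, hDinf⟩ := cauchySeq_tendsto_of_complete hDcauchy
  have htendD : Tendsto D atTop (𝓝 Dinf) := by
    apply hDinf.congr'
    filter_upwards [eventually_ge_atTop s] with t ht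
    rw [max_eq_left ht]
  -- the renormalized trajectory converges
  set hinf : ℂ := z * Complex.exp (lam s - Dinf) with hhinfdef
  have hinfne : hinf ≠ 0 := mul_ne_zero hz0 (Complex.exp_ne_zero _)
  set H : ℝ → ℂ := fun t => w t * Complex.exp (lam t) with hHdef
  have hHt : ∀ t, s ≤ t → H t = z * Complex.exp (lam s - D t) := by
    intro t ht
    have hii1 : IntervalIntegrable pwg volume s t :=
      (intervalIntegrable_iff_integrableOn_Ioc_of_le ht).2 (hpwgIoc s t le_rfl)
    have hii2 : IntervalIntegrable (fun ξ => E.p 0 ξ) volume s t := hp0ii s t hs ht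
    have hΛD : (∫ ξ in s..t, pwg ξ) = D t + (lam t - lam s) := by
      have h1 : D t = (∫ ξ in s..t, pwg ξ) - ∫ ξ in s..t, E.p 0 ξ := by
        simp only [hDdef]
        rw [intervalIntegral.integral_sub hii1 hii2]
      have h2 := hlam_add s t hs ht
      rw [h1, ← h2]
      ring
    simp only [hHdef]
    rw [(hrepall t ht).2.1, hΛD]
    rw [mul_assoc, ← Complex.exp_add]
    congr 2
    ring
  have hHtend : Tendsto H atTop (𝓝 hinf) := by
    have h1 : Tendsto (fun t => z * Complex.exp (lam s - D t)) atTop (𝓝 hinf) := by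
      rw [hhinfdef]
      apply Tendsto.const_mul
      apply (Complex.continuous_exp.tendsto _).comp
      exact tendsto_const_nhds.sub htendD
    apply h1.congr'
    filter_upwards [eventually_ge_atTop s] with t ht
    exact (hHt t ht).symm
  -- the unimodular factor
  set Φ : ℝ → ℂ := fun t => (E.φ s t z / ((Complex.abs (E.φ s t z) : ℝ) : ℂ))
    * Complex.exp (Complex.I * ((lam t).im : ℂ)) with hΦdef
  have hAB : ∀ t : ℝ, Φ t * Complex.exp (-Complex.I * ((lam t).im : ℂ))
      = E.φ s t z / ((Complex.abs (E.φ s t z) : ℝ) : ℂ) := by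
    intro t
    simp only [hΦdef]
    rw [mul_assoc, ← Complex.exp_add]
    have h1 : Complex.I * ((lam t).im : ℂ) + -Complex.I * ((lam t).im : ℂ) = 0 := by ring
    rw [h1, Complex.exp_zero, mul_one]
  have habsne : ∀ t, s ≤ t → ((Complex.abs (w t) : ℝ) : ℂ) ≠ 0 := by
    intro t ht
    simp only [Complex.ofReal_ne_zero]
    exact Complex.abs.ne_zero (hwne t ht)
  have hΦeq : ∀ t, s ≤ t → Φ t = H t / ((Complex.abs (H t) : ℝ) : ℂ) := by
    intro t ht
    have habsH : Complex.abs (H t) = Complex.abs (w t) * Real.exp ((lam t).re) := by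
      simp only [hHdef]
      rw [map_mul, Complex.abs_exp]
    have hexpdec : Complex.exp (lam t)
        = (Real.exp ((lam t).re) : ℂ) * Complex.exp (Complex.I * ((lam t).im : ℂ)) := by
      rw [Complex.ofReal_exp, ← Complex.exp_add]
      congr 1
      rw [mul_comm Complex.I _]
      exact (Complex.re_add_im (lam t)).symm
    simp only [hΦdef, hHdef]
    rw [habsH, hexpdec]
    have h2 : ((Complex.abs (w t) * Real.exp ((lam t).re) : ℝ) : ℂ)
        = ((Complex.abs (w t) : ℝ) : ℂ) * ((Real.exp ((lam t).re) : ℝ) : ℂ) := by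
      push_cast; ring
    rw [h2]
    have h3 := habsne t ht
    have h4 : ((Real.exp ((lam t).re) : ℝ) : ℂ) ≠ 0 := by
      simp only [Complex.ofReal_ne_zero]
      exact Real.exp_ne_zero _
    simp only [hwdef] at h3 ⊢
    field_simp
  set u0 : ℂ := hinf / ((Complex.abs hinf : ℝ) : ℂ) with hu0def
  have habsinfne : ((Complex.abs hinf : ℝ) : ℂ) ≠ 0 := by
    simp only [Complex.ofReal_ne_zero]
    exact Complex.abs.ne_zero hinfne
  have hu0ne : u0 ≠ 0 := div_ne_zero hinfne habsinfne
  have hΦtend : Tendsto Φ atTop (𝓝 u0) := by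
    have h1 : Tendsto (fun t => ((Complex.abs (H t) : ℝ) : ℂ)) atTop
        (𝓝 ((Complex.abs hinf : ℝ) : ℂ)) := by
      apply (Complex.continuous_ofReal.tendsto _).comp
      exact (Complex.continuous_abs.tendsto _).comp hHtend
    have h2 : Tendsto (fun t => H t / ((Complex.abs (H t) : ℝ) : ℂ)) atTop (𝓝 u0) :=
      hHtend.div h1 habsinfne
    apply h2.congr'
    filter_upwards [eventually_ge_atTop s] with t ht
    exact (hΦeq t ht).symm
  have hexpc : Complex.exp (Complex.I * ((Complex.arg hinf : ℝ) : ℂ)) = u0 := by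
    have h1 := Complex.abs_mul_exp_arg_mul_I hinf
    rw [hu0def]
    rw [eq_div_iff habsinfne]
    rw [mul_comm Complex.I _, mul_comm _ ((Complex.abs hinf : ℝ) : ℂ)]
    exact h1
  -- final set equality
  refine ⟨Complex.arg hinf, ?_⟩
  ext u1
  simp only [Set.mem_setOf_eq, Set.mem_image]
  constructor
  · rintro ⟨tn, htn, hconv⟩
    have hΦn : Tendsto (fun n => Φ (tn n)) atTop (𝓝 u0) := hΦtend.comp htn
    refine ⟨u0⁻¹ * u1, ⟨tn, htn, ?_⟩, ?_⟩
    · have h2 : Tendsto (fun n => (Φ (tn n))⁻¹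
          * (E.φ s (tn n) z / ((Complex.abs (E.φ s (tn n) z) : ℝ) : ℂ)))
          atTop (𝓝 (u0⁻¹ * u1)) := (hΦn.inv₀ hu0ne).mul hconv
      apply h2.congr'
      filter_upwards [htn.eventually (eventually_ge_atTop s)] with n hn
      have hΦne : Φ (tn n) ≠ 0 := by
        simp only [hΦdef]
        apply mul_ne_zero
        · exact div_ne_zero (hwne (tn n) hn) (habsne (tn n) hn)
        · exact Complex.exp_ne_zero _
      have h3 := hAB (tn n)
      rw [← h3]
      exact inv_mul_cancel_left₀ hΦne _
    · rw [hexpc]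
      exact mul_inv_cancel_left₀ hu0ne u1
  · rintro ⟨v, ⟨tn, htn, hconv⟩, rfl⟩
    refine ⟨tn, htn, ?_⟩
    have hΦn : Tendsto (fun n => Φ (tn n)) atTop (𝓝 u0) := hΦtend.comp htn
    have h2 : Tendsto (fun n => Φ (tn n)
        * Complex.exp (-Complex.I * (((∫ ξ in (0:ℝ)..(tn n), E.p 0 ξ).im : ℝ) : ℂ)))
        atTop (𝓝 (u0 * v)) := hΦn.mul hconv
    have h3 : Tendsto (fun n => E.φ s (tn n) z
        / ((Complex.abs (E.φ s (tn n) z) : ℝ) : ℂ)) atTop (𝓝 (u0 * v)) := by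
      apply h2.congr
      intro n
      exact hAB (tn n)
    rw [hexpc]
    exact h3
end

section
/- For every α ∈ (0, π/2) and every R > 0 there exists β ∈ (0, π/2) such that: whenever c, w ∈ ℍ = {u ∈ ℂ : Re u > 0} satisfy |Im c| ≤ tan(α)·Re c and ρ_ℍ(c, w) ≤ R, one has |Im w| ≤ tan(β)·Re w. In other words, every hyperbolic R-neighbourhood of a Stolz angle in ℍ at the origin with half-opening α is contained in a Stolz angle with half-opening β. -/
open Complex Set

/-- The hyperbolic (Poincaré) distance of the right half-plane
`ρ_ℍ(w₁,w₂) = 2·artanh|(w₁−w₂)/(w₁+conj w₂)| = log((1+d)/(1−d))` where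
`d = |(w₁−w₂)/(w₁+conj w₂)|`. -/
noncomputable def rhoH (w₁ w₂ : ℂ) : ℝ :=
  Real.log ((1 + ‖(w₁ - w₂) / (w₁ + (starRingEnd ℂ) w₂)‖) /
    (1 - ‖(w₁ - w₂) / (w₁ + (starRingEnd ℂ) w₂)‖))

/-- Auxiliary real-arithmetic lemma: if `a,x > 0`, `|b| ≤ s·a` and
`(a−x)² + (b−y)² ≤ t²((a+x)² + (b−y)²)` with `0 < t < 1`, then
`|y| ≤ M·x` where `M = (s+u)·(1+t)/(1−t) + u`, `u = t/√(1−t²)`. -/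
lemma stolz_aux (t s u a b x y : ℝ) (ht0 : 0 < t) (ht1 : t < 1)
    (hu0 : 0 ≤ u) (hu2 : u ^ 2 = t ^ 2 / (1 - t ^ 2)) (hs0 : 0 < s)
    (ha0 : 0 < a) (hx0 : 0 < x) (hb : |b| ≤ s * a)
    (h1 : (a - x) ^ 2 + (b - y) ^ 2 ≤ t ^ 2 * ((a + x) ^ 2 + (b - y) ^ 2)) :
    |y| ≤ ((s + u) * ((1 + t) / (1 - t)) + u) * x := by
  have ht2 : (0:ℝ) < 1 - t ^ 2 := by nlinarith
  have key : 0 ≤ (1 - t ^ 2) * (b - y) ^ 2 := mul_nonneg ht2.le (sq_nonneg _)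
  have h2 : (a - x) ^ 2 ≤ (t * (a + x)) ^ 2 := by nlinarith [h1, key]
  have h2' : |a - x| ≤ t * (a + x) := by
    have h := Real.sqrt_le_sqrt h2
    rwa [Real.sqrt_sq_eq_abs, Real.sqrt_sq (by positivity)] at h
  have ha : a ≤ (1 + t) / (1 - t) * x := by
    rw [div_mul_eq_mul_div, le_div_iff₀ (by linarith : (0:ℝ) < 1 - t)]
    have h := abs_le.mp h2'
    nlinarith [h.1, h.2]
  have h3 : (b - y) ^ 2 ≤ (u * (a + x)) ^ 2 := by
    rw [mul_pow, hu2, div_mul_eq_mul_div, le_div_iff₀ ht2]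
    nlinarith [h1, sq_nonneg (a - x)]
  have h3' : |b - y| ≤ u * (a + x) := by
    have h := Real.sqrt_le_sqrt h3
    rwa [Real.sqrt_sq_eq_abs, Real.sqrt_sq (by positivity)] at h
  have hy1 : |y| ≤ |b| + |b - y| := by
    calc |y| = |b - (b - y)| := by ring_nf
      _ ≤ |b| + |b - y| := abs_sub _ _
  have hfin : (s + u) * a ≤ (s + u) * ((1 + t) / (1 - t) * x) :=
    mul_le_mul_of_nonneg_left ha (by linarith)
  nlinarith [hy1, h3', hb, hfin]

/-- Every hyperbolic `R`-neighbourhood of a Stolz angle in `ℍ = {Re > 0}` at the origin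
with half-opening `α < π/2` is contained in a Stolz angle with half-opening `β < π/2`:
if `|Im c| ≤ tan α · Re c` and `ρ_ℍ(c,w) ≤ R` then `|Im w| ≤ tan β · Re w`. -/
theorem stolz_angle_hyperbolic_neighbourhood :
    ∀ α : ℝ, 0 < α → α < Real.pi / 2 → ∀ R : ℝ, 0 < R →
      ∃ β : ℝ, 0 < β ∧ β < Real.pi / 2 ∧
        ∀ c w : ℂ, 0 < c.re → 0 < w.re →
          |c.im| ≤ Real.tan α * c.re → rhoH c w ≤ R →
          |w.im| ≤ Real.tan β * w.re := by
  intro α hα hα2 R hR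
  set E := Real.exp R with hE
  have hE1 : 1 < E := by
    calc (1:ℝ) = Real.exp 0 := Real.exp_zero.symm
      _ < E := Real.exp_lt_exp.mpr hR
  set t := (E - 1) / (E + 1) with htdef
  have ht0 : 0 < t := div_pos (by linarith) (by linarith)
  have ht1 : t < 1 := by rw [div_lt_one (by linarith)]; linarith
  have ht2 : (0:ℝ) < 1 - t ^ 2 := by nlinarith
  set u := Real.sqrt (t ^ 2 / (1 - t ^ 2)) with hu
  have hu0 : 0 ≤ u := Real.sqrt_nonneg _
  have hu2 : u ^ 2 = t ^ 2 / (1 - t ^ 2) := Real.sq_sqrt (by positivity)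
  set s := Real.tan α with hs
  have hs0 : 0 < s := Real.tan_pos_of_pos_of_lt_pi_div_two hα hα2
  set M := (s + u) * ((1 + t) / (1 - t)) + u with hM
  have hM0 : 0 < M := by
    rw [hM]
    have h1 : 0 < (1 + t) / (1 - t) := div_pos (by linarith) (by linarith)
    have h2 : 0 < (s + u) * ((1 + t) / (1 - t)) := mul_pos (by linarith) h1
    linarith
  refine ⟨Real.arctan M,
    by simpa [Real.arctan_zero] using Real.arctan_strictMono hM0,
    Real.arctan_lt_pi_div_two M, ?_⟩
  intro c w hc hw hb hρ
  rw [Real.tan_arctan]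
  set d := ‖(c - w) / (c + (starRingEnd ℂ) w)‖ with hd
  have hd0 : 0 ≤ d := norm_nonneg _
  have hdiv : d = ‖c - w‖ / ‖c + (starRingEnd ℂ) w‖ := by
    rw [hd, norm_div]
  have hsq1 : (‖c - w‖) ^ 2 = (c.re - w.re) ^ 2 + (c.im - w.im) ^ 2 := by
    rw [Complex.sq_norm, Complex.normSq_apply]; simp; ring
  have hsq2 : (‖c + (starRingEnd ℂ) w‖) ^ 2
      = (c.re + w.re) ^ 2 + (c.im - w.im) ^ 2 := by
    rw [Complex.sq_norm, Complex.normSq_apply]; simp; ring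
  have habs_lt : ‖c - w‖ < ‖c + (starRingEnd ℂ) w‖ := by
    apply lt_of_pow_lt_pow_left₀ 2 (norm_nonneg _)
    rw [hsq1, hsq2]
    nlinarith [mul_pos hc hw]
  have hA0 : 0 < ‖c + (starRingEnd ℂ) w‖ :=
    (norm_nonneg (c - w)).trans_lt habs_lt
  have hd1 : d < 1 := by rw [hdiv, div_lt_one hA0]; exact habs_lt
  unfold rhoH at hρ
  rw [← hd] at hρ
  have hfrac : (1 + d) / (1 - d) ≤ E := by
    have h1 : 0 < (1 + d) / (1 - d) := div_pos (by linarith) (by linarith)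
    calc (1 + d) / (1 - d) = Real.exp (Real.log ((1 + d) / (1 - d))) :=
          (Real.exp_log h1).symm
      _ ≤ E := Real.exp_le_exp.mpr hρ
  have hdt : d ≤ t := by
    rw [htdef, le_div_iff₀ (by linarith : (0:ℝ) < E + 1)]
    have h := (div_le_iff₀ (by linarith : (0:ℝ) < 1 - d)).mp hfrac
    nlinarith [h]
  have hcw : ‖c - w‖ ≤ t * ‖c + (starRingEnd ℂ) w‖ := by
    rw [hdiv] at hdt
    have h := (div_le_iff₀ hA0).mp hdt
    linarith [h]
  have h1 : (c.re - w.re) ^ 2 + (c.im - w.im) ^ 2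
      ≤ t ^ 2 * ((c.re + w.re) ^ 2 + (c.im - w.im) ^ 2) := by
    have h := pow_le_pow_left₀ (norm_nonneg _) hcw 2
    rw [mul_pow, hsq1, hsq2] at h
    exact h
  rw [hM]
  exact stolz_aux t s u c.re c.im w.re w.im ht0 ht1 hu0 hu2 hs0 hc hw hb h1
end

section
/- For 0 ≤ s ≤ t and z ∈ 𝔻 define φ_{s,t}(z) := 1 + (z − 1)/(1 − (z − 1)·(t − s + i·(sin t − sin s))). Then: each φ_{s,t} is a well-defined holomorphic self-map of 𝔻 (the denominator never vanishes for z ∈ 𝔻); the family (φ_{s,t}) is an evolution family in 𝔻 (it satisfies φ_{s,s} = id_𝔻, the composition law φ_{s,t} = φ_{u,t} ∘ φ_{s,u} for 0 ≤ s ≤ u ≤ t, and the local absolute-continuity condition); and for every s ≥ 0, φ_{s,t} → 1 (the constant map equal to 1) uniformly on compact subsets of 𝔻 as t → +∞. -/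
open Complex MeasureTheory Set Filter Topology

-- Re(1/(z-1)) < -1/2 for |z|<1
lemma re_inv_lt (z : ℂ) (hz : ‖z‖ < 1) : ((z - 1)⁻¹).re < -(1/2) := by
  have hw : z - 1 ≠ 0 := by
    intro h
    rw [sub_eq_zero] at h
    simp [h] at hz
  have hn : 0 < Complex.normSq (z - 1) := Complex.normSq_pos.2 hw
  have hz' : Complex.normSq z < 1 := by
    have := Complex.sq_norm z
    nlinarith [norm_nonneg z]
  rw [Complex.inv_re, div_lt_iff₀ hn]
  simp only [Complex.normSq_apply, Complex.sub_re, Complex.sub_im, Complex.one_re,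
    Complex.one_im, Complex.normSq_apply] at *
  nlinarith

lemma key (z : ℂ) (hz : ‖z‖ < 1) (c : ℂ) (hc : 0 ≤ c.re) :
    ‖z - 1‖ * (1/2 + c.re) ≤ ‖1 - (z - 1) * c‖ := by
  have hw : z - 1 ≠ 0 := by
    intro h
    rw [sub_eq_zero] at h
    simp [h] at hz
  have h1 : 1 - (z - 1) * c = (z - 1) * ((z - 1)⁻¹ - c) := by
    field_simp
  rw [h1, norm_mul]
  refine mul_le_mul_of_nonneg_left ?_ (norm_nonneg _)
  have h2 := re_inv_lt z hz
  calc 1/2 + c.re ≤ -(((z - 1)⁻¹ - c).re) := by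
        simp only [Complex.sub_re]; linarith
    _ ≤ |(((z - 1)⁻¹ - c).re)| := neg_le_abs _
    _ ≤ ‖(z - 1)⁻¹ - c‖ := Complex.abs_re_le_norm _

lemma Dne (z : ℂ) (hz : ‖z‖ < 1) (c : ℂ) (hc : 0 ≤ c.re) :
    1 - (z - 1) * c ≠ 0 := by
  have hk := key z hz c hc
  have hw : 0 < ‖z - 1‖ := by
    rw [norm_pos_iff]
    intro h
    rw [sub_eq_zero] at h
    simp [h] at hz
  intro h
  rw [h] at hk
  simp at hk
  nlinarith

lemma memUD (z : ℂ) (hz : ‖z‖ < 1) (c : ℂ) (hc : 0 ≤ c.re) :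
    ‖1 + (z - 1) / (1 - (z - 1) * c)‖ < 1 := by
  have hw : z - 1 ≠ 0 := by
    intro h; rw [sub_eq_zero] at h; simp [h] at hz
  have hD := Dne z hz c hc
  set v := (z - 1) / (1 - (z - 1) * c) with hv
  have hv0 : v ≠ 0 := div_ne_zero hw hD
  have hvinv : v⁻¹ = (z - 1)⁻¹ - c := by
    rw [hv]
    field_simp
  have hre : (v⁻¹).re < -(1/2) := by
    rw [hvinv]
    have := re_inv_lt z hz
    simp only [Complex.sub_re]
    linarith
  have hn : 0 < Complex.normSq v := Complex.normSq_pos.2 hv0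
  rw [Complex.inv_re, div_lt_iff₀ hn] at hre
  have h1 : Complex.normSq (1 + v) < 1 := by
    simp only [Complex.normSq_apply, Complex.add_re, Complex.add_im, Complex.one_re,
      Complex.one_im, Complex.normSq_apply] at *
    nlinarith
  nlinarith [Complex.sq_norm (1 + v), norm_nonneg (1 + v)]

lemma absbound (z : ℂ) (hz : ‖z‖ < 1) (c : ℂ) (hc : 0 ≤ c.re) :
    ‖(z - 1) / (1 - (z - 1) * c)‖ ≤ 1 / (1/2 + c.re) := by
  have hw : 0 < ‖z - 1‖ := by
    rw [norm_pos_iff]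
    intro h; rw [sub_eq_zero] at h; simp [h] at hz
  have hk := key z hz c hc
  have hpos : (0:ℝ) < 1/2 + c.re := by linarith
  rw [norm_div, div_le_div_iff₀ (lt_of_lt_of_le (by positivity) hk) hpos]
  nlinarith

lemma cre (a b : ℝ) :
    ((((b - a : ℝ)) : ℂ) + Complex.I * ((Real.sin b - Real.sin a : ℝ) : ℂ)).re = b - a := by
  simp

/-- The explicit family
`φ_{s,t}(z) = 1 + (z−1)/(1 − (z−1)(t − s + i(sin t − sin s)))` is a well-defined
evolution family of holomorphic self-maps of `𝔻` (nonvanishing denominator, identity at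
`t = s`, composition law, local absolute continuity) and, for every `s ≥ 0`,
`φ_{s,t} → 1` uniformly on compact subsets of `𝔻` as `t → +∞`. -/
theorem example_convergence_to_DW_point (φ : ℝ → ℝ → ℂ → ℂ)
    (hφ : ∀ s t : ℝ, ∀ z : ℂ, φ s t z =
      1 + (z - 1) / (1 - (z - 1) * (((t - s : ℝ) : ℂ) +
        Complex.I * ((Real.sin t - Real.sin s : ℝ) : ℂ)))) :
    (∀ s t : ℝ, 0 ≤ s → s ≤ t → ∀ z ∈ UD,
      (1 - (z - 1) * (((t - s : ℝ) : ℂ) +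
        Complex.I * ((Real.sin t - Real.sin s : ℝ) : ℂ))) ≠ 0 ∧
      φ s t z ∈ UD) ∧
    (∀ s t : ℝ, 0 ≤ s → s ≤ t → DifferentiableOn ℂ (φ s t) UD) ∧
    (∀ s : ℝ, 0 ≤ s → ∀ z ∈ UD, φ s s z = z) ∧
    (∀ s u t : ℝ, 0 ≤ s → s ≤ u → u ≤ t → ∀ z ∈ UD,
      φ s t z = φ u t (φ s u z)) ∧
    (∀ z ∈ UD, ∀ T : ℝ, 0 < T →
      ∃ k : ℝ → ℝ, (∀ ξ, 0 ≤ k ξ) ∧ MeasureTheory.IntegrableOn k (Set.Icc 0 T) ∧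
        ∀ s u t : ℝ, 0 ≤ s → s ≤ u → u ≤ t → t ≤ T →
          ‖φ s u z - φ s t z‖ ≤ ∫ ξ in u..t, k ξ) ∧
    (∀ s : ℝ, 0 ≤ s → ∀ K : Set ℂ, K ⊆ UD → IsCompact K →
      TendstoUniformlyOn (fun t z => φ s t z) (fun _ => 1) atTop K) := by
  refine ⟨?_, ?_, ?_, ?_, ?_, ?_⟩
  · -- nonvanishing and self-map
    intro s t hs hst z hz
    have hz' : ‖z‖ < 1 := hz
    have hcre : 0 ≤ (((t - s : ℝ) : ℂ) +
        Complex.I * ((Real.sin t - Real.sin s : ℝ) : ℂ)).re := by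
      rw [cre]; linarith
    refine ⟨Dne z hz' _ hcre, ?_⟩
    show ‖_‖ < 1
    rw [hφ]
    exact memUD z hz' _ hcre
  · -- holomorphy
    intro s t hs hst
    have hcre : 0 ≤ (((t - s : ℝ) : ℂ) +
        Complex.I * ((Real.sin t - Real.sin s : ℝ) : ℂ)).re := by
      rw [cre]; linarith
    set c : ℂ := ((t - s : ℝ) : ℂ) + Complex.I * ((Real.sin t - Real.sin s : ℝ) : ℂ)
    have : DifferentiableOn ℂ (fun z => 1 + (z - 1) / (1 - (z - 1) * c)) UD := by
      intro z hz
      have hD : 1 - (z - 1) * c ≠ 0 := Dne z hz c hcre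
      apply DifferentiableAt.differentiableWithinAt
      fun_prop (disch := assumption)
    exact this.congr (fun z _ => hφ s t z)
  · -- identity
    intro s hs z hz
    rw [hφ]
    simp
  · -- composition
    intro s u t hs hsu hut z hz
    have hz' : ‖z‖ < 1 := hz
    rw [hφ, hφ, hφ]
    set c1 : ℂ := ((u - s : ℝ) : ℂ) + Complex.I * ((Real.sin u - Real.sin s : ℝ) : ℂ) with hc1
    set c2 : ℂ := ((t - u : ℝ) : ℂ) + Complex.I * ((Real.sin t - Real.sin u : ℝ) : ℂ) with hc2
    have hsum : ((t - s : ℝ) : ℂ) + Complex.I * ((Real.sin t - Real.sin s : ℝ) : ℂ)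
        = c1 + c2 := by
      rw [hc1, hc2]; simp only [Complex.ofReal_sub]; ring
    have hc1re : 0 ≤ c1.re := by rw [hc1, cre]; linarith
    have hc2re : 0 ≤ c2.re := by rw [hc2, cre]; linarith
    have hc12re : 0 ≤ (c1 + c2).re := by
      rw [Complex.add_re]; linarith
    have hD1 : 1 - (z - 1) * c1 ≠ 0 := Dne z hz' c1 hc1re
    have hD12 : 1 - (z - 1) * (c1 + c2) ≠ 0 := Dne z hz' _ hc12re
    rw [hsum]
    have hinner : 1 + (z - 1) / (1 - (z - 1) * c1) - 1 = (z - 1) / (1 - (z - 1) * c1) := by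
      ring
    rw [hinner]
    have hdenom : 1 - (z - 1) / (1 - (z - 1) * c1) * c2
        = (1 - (z - 1) * (c1 + c2)) / (1 - (z - 1) * c1) := by
      field_simp
      ring
    rw [hdenom, div_div_div_cancel_right₀ hD1]
  · -- absolute continuity
    intro z hz T hT
    have hz' : ‖z‖ < 1 := hz
    refine ⟨fun _ => 8, fun _ => by norm_num, ?_, ?_⟩
    · exact integrableOn_const measure_Icc_lt_top.ne
    · intro s u t hs hsu hut htT
      rw [intervalIntegral.integral_const, smul_eq_mul, mul_comm]
      rw [hφ, hφ]
      set c1 : ℂ := ((u - s : ℝ) : ℂ) + Complex.I * ((Real.sin u - Real.sin s : ℝ) : ℂ) with hc1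
      set c2 : ℂ := ((t - s : ℝ) : ℂ) + Complex.I * ((Real.sin t - Real.sin s : ℝ) : ℂ) with hc2
      have hc1re : 0 ≤ c1.re := by rw [hc1, cre]; linarith
      have hc2re : 0 ≤ c2.re := by rw [hc2, cre]; linarith
      have hD1 : 1 - (z - 1) * c1 ≠ 0 := Dne z hz' c1 hc1re
      have hD2 : 1 - (z - 1) * c2 ≠ 0 := Dne z hz' c2 hc2re
      have hw : z - 1 ≠ 0 := by
        intro h; rw [sub_eq_zero] at h; simp [h] at hz'
      have hdiff : 1 + (z - 1) / (1 - (z - 1) * c1) - (1 + (z - 1) / (1 - (z - 1) * c2))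
          = (z - 1) ^ 2 * (c1 - c2) / ((1 - (z - 1) * c1) * (1 - (z - 1) * c2)) := by
        field_simp
        ring
      rw [hdiff, norm_div, norm_mul, norm_mul, norm_pow]
      have ha : 0 < ‖z - 1‖ := norm_pos_iff.2 hw
      set a := ‖z - 1‖
      -- bound |c1 - c2| ≤ 2(t-u)
      have hcd : c1 - c2 = ((u - t : ℝ) : ℂ) + Complex.I * ((Real.sin u - Real.sin t : ℝ) : ℂ) := by
        rw [hc1, hc2]; simp only [Complex.ofReal_sub]; ring
      have hsin : |Real.sin u - Real.sin t| ≤ |u - t| := by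
        rw [Real.sin_sub_sin, abs_mul, abs_mul, _root_.abs_two]
        have h1 := Real.abs_sin_le_abs (x := (u - t) / 2)
        have h2 := Real.abs_cos_le_one ((u + t) / 2)
        have h3 : |(u - t) / 2| = |u - t| / 2 := by rw [abs_div]; norm_num
        nlinarith [abs_nonneg (Real.sin ((u - t) / 2)), abs_nonneg (u - t),
          abs_nonneg (Real.cos ((u + t) / 2))]
      have he : ‖c1 - c2‖ ≤ 2 * (t - u) := by
        rw [hcd]
        calc ‖((u - t : ℝ) : ℂ) + Complex.I * ((Real.sin u - Real.sin t : ℝ) : ℂ)‖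
            ≤ ‖((u - t : ℝ) : ℂ)‖
              + ‖Complex.I * ((Real.sin u - Real.sin t : ℝ) : ℂ)‖ :=
              norm_add_le _ _
          _ = |u - t| + |Real.sin u - Real.sin t| := by
              rw [norm_mul, Complex.norm_I, one_mul, Complex.norm_real, Complex.norm_real, Real.norm_eq_abs, Real.norm_eq_abs]
          _ ≤ |u - t| + |u - t| := by linarith
          _ = 2 * (t - u) := by rw [abs_of_nonpos (by linarith)]; ring
      have hd1 : a * (1/2) ≤ ‖1 - (z - 1) * c1‖ := by
        have := key z hz' c1 hc1re
        nlinarith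
      have hd2 : a * (1/2) ≤ ‖1 - (z - 1) * c2‖ := by
        have := key z hz' c2 hc2re
        nlinarith
      have hpos : 0 < ‖1 - (z - 1) * c1‖ * ‖1 - (z - 1) * c2‖ := by
        nlinarith
      rw [div_le_iff₀ hpos]
      have he0 : 0 ≤ ‖c1 - c2‖ := norm_nonneg _
      have htu : (0:ℝ) ≤ t - u := by linarith
      nlinarith [mul_le_mul hd1 hd2 (by positivity) (norm_nonneg _),
        mul_le_mul_of_nonneg_left he (by positivity : (0:ℝ) ≤ a ^ 2),
        mul_le_mul_of_nonneg_left
          (mul_le_mul hd1 hd2 (by positivity) (norm_nonneg _))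
          (by linarith : (0:ℝ) ≤ 8 * (t - u))]
  · -- uniform convergence
    intro s hs K hK hKc
    rw [Metric.tendstoUniformlyOn_iff]
    intro ε hε
    filter_upwards [eventually_ge_atTop (s + 2 / ε)] with t ht z hzK
    have hz' : ‖z‖ < 1 := hK hzK
    have hst : s ≤ t := by
      have : 0 ≤ 2 / ε := by positivity
      linarith
    have hcre : 0 ≤ (((t - s : ℝ) : ℂ) +
        Complex.I * ((Real.sin t - Real.sin s : ℝ) : ℂ)).re := by
      rw [cre]; linarith
    rw [Complex.dist_eq, hφ]
    have h1 : (1 : ℂ) - (1 + (z - 1) / (1 - (z - 1) * (((t - s : ℝ) : ℂ) +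
        Complex.I * ((Real.sin t - Real.sin s : ℝ) : ℂ))))
        = -((z - 1) / (1 - (z - 1) * (((t - s : ℝ) : ℂ) +
        Complex.I * ((Real.sin t - Real.sin s : ℝ) : ℂ)))) := by ring
    rw [h1, norm_neg]
    have hb := absbound z hz' _ hcre
    rw [cre] at hb
    have hlt : 1 / (1/2 + (t - s)) < ε := by
      have hts : 2 / ε ≤ t - s := by linarith
      have h2 : 0 < 2 / ε := by positivity
      rw [div_lt_iff₀ (by linarith)]
      have : ε * (2 / ε) = 2 := by field_simp
      nlinarith
    linarith
end

section
/- For 0 ≤ s ≤ t and z ∈ 𝔻 define φ_{s,t}(z) := 1 + (z − 1)/(1 − (z − 1)·(e^{−s} − e^{−t} + i·(t·sin t − s·sin s))). Then: each φ_{s,t} is a well-defined holomorphic self-map of 𝔻; the family (φ_{s,t}) is an evolution family in 𝔻 (it satisfies φ_{s,s} = id_𝔻, the composition law, and the local absolute-continuity condition); and for every s ≥ 0 and every z ∈ 𝔻, the ω-limit of the trajectory t ↦ φ_{s,t}(z), i.e. the set of all p ∈ ℂ that are limits of sequences φ_{s,t_n}(z) with t_n → +∞, equals the full circle { w ∈ ℂ,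 w ≠ 1 : Re(1/(1 − w)) = Re(1/(1 − z)) + e^{−s} } ∪ {1}, which is the boundary circle of a horocycle internally tangent to the unit circle at the point 1. -/
open Complex MeasureTheory Set Filter Topology

lemma one_sub_ne_zero' {z : ℂ} (hz : ‖z‖ < 1) : (1 : ℂ) - z ≠ 0 := by
  intro h
  have : z = 1 := by linear_combination -h
  simp [this] at hz

lemma half_lt_re' {z : ℂ} (hz : ‖z‖ < 1) : 1/2 < (1/(1-z)).re := by
  have h1 : (1:ℂ) - z ≠ 0 := one_sub_ne_zero' hz
  have hN : 0 < Complex.normSq (1 - z) := Complex.normSq_pos.mpr h1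
  have hz2 : Complex.normSq z < 1 := by
    have h := Complex.sq_norm z
    nlinarith [norm_nonneg z]
  rw [show (1:ℂ)/(1-z) = (1-z)⁻¹ from one_div _, Complex.inv_re, lt_div_iff₀ hN]
  have hre : (1 - z).re = 1 - z.re := by simp
  have hns : Complex.normSq (1 - z) = 1 - 2*z.re + Complex.normSq z := by
    simp [Complex.normSq_apply, Complex.sub_re, Complex.sub_im]; ring
  rw [hre]; nlinarith

lemma mem_of_re' {w : ℂ} (hw : 1/2 < w.re) : ‖1 - 1/w‖ < 1 := by
  have hw0 : w ≠ 0 := by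
    intro h; rw [h] at hw; simp at hw; linarith
  have h1 : (1 : ℂ) - 1/w = (w - 1)/w := by field_simp
  rw [h1, norm_div, div_lt_one (norm_pos_iff.mpr hw0)]
  have h2 : ‖w-1‖ ^ 2 < ‖w‖ ^ 2 := by
    rw [Complex.sq_norm, Complex.sq_norm]
    simp only [Complex.normSq_apply, Complex.sub_re, Complex.sub_im, Complex.one_re, Complex.one_im]
    nlinarith
  exact lt_of_pow_lt_pow_left₀ 2 (norm_nonneg _) h2

noncomputable def Af (s t : ℝ) : ℂ :=
  ((Real.exp (-s) - Real.exp (-t) : ℝ) : ℂ) +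
    Complex.I * ((t * Real.sin t - s * Real.sin s : ℝ) : ℂ)

lemma Af_re (s t : ℝ) : (Af s t).re = Real.exp (-s) - Real.exp (-t) := by
  simp only [Af, Complex.add_re, Complex.ofReal_re, Complex.mul_re, Complex.I_re,
    Complex.I_im, Complex.ofReal_im]
  ring

lemma Af_im (s t : ℝ) : (Af s t).im = t * Real.sin t - s * Real.sin s := by
  simp only [Af, Complex.add_im, Complex.ofReal_im, Complex.mul_im, Complex.I_re,
    Complex.I_im, Complex.ofReal_re]
  ring

lemma Af_add (s u t : ℝ) : Af s u + Af u t = Af s t := by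
  unfold Af; push_cast; ring

lemma Af_re_nonneg {s t : ℝ} (h : s ≤ t) : 0 ≤ (Af s t).re := by
  rw [Af_re]
  exact sub_nonneg.mpr (Real.exp_le_exp.mpr (by linarith))

lemma key_factor {z : ℂ} (hz : ‖z‖ < 1) (A : ℂ) :
    (1 : ℂ) - (z - 1) * A = (1 - z) * (1/(1-z) + A) := by
  have h1 : (1:ℂ) - z ≠ 0 := one_sub_ne_zero' hz
  field_simp; ring

lemma wre_pos {z : ℂ} (hz : ‖z‖ < 1) {A : ℂ} (hA : 0 ≤ A.re) :
    1/2 < (1/(1-z) + A).re := by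
  have := half_lt_re' hz
  rw [Complex.add_re]; linarith

lemma w_ne_zero {z : ℂ} (hz : ‖z‖ < 1) {A : ℂ} (hA : 0 ≤ A.re) :
    1/(1-z) + A ≠ 0 := by
  intro h
  have := wre_pos hz hA
  rw [h] at this; simp at this; linarith

lemma denom_ne {z : ℂ} (hz : ‖z‖ < 1) {A : ℂ} (hA : 0 ≤ A.re) :
    (1 : ℂ) - (z - 1) * A ≠ 0 := by
  rw [key_factor hz]
  exact mul_ne_zero (one_sub_ne_zero' hz) (w_ne_zero hz hA)

lemma phi_eq {z : ℂ} (hz : ‖z‖ < 1) {A : ℂ} (hA : 0 ≤ A.re) :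
    1 + (z - 1) / (1 - (z - 1) * A) = 1 - 1/(1/(1-z) + A) := by
  have h1 : (1:ℂ) - z ≠ 0 := one_sub_ne_zero' hz
  have h2 : 1/(1-z) + A ≠ 0 := w_ne_zero hz hA
  rw [key_factor hz]
  field_simp
  ring

lemma inv_one_sub' {W : ℂ} (hW : W ≠ 0) : 1/(1 - (1 - 1/W)) = W := by
  field_simp
  ring

lemma exists_tsint (y M : ℝ) : ∃ t : ℝ, M ≤ t ∧ t * Real.sin t = y := by
  obtain ⟨n, hn⟩ := exists_nat_ge (max M |y|)
  have hpi := Real.pi_gt_three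
  have hn2 : (n:ℝ) * 1 ≤ (n:ℝ) * (2 * Real.pi) :=
    mul_le_mul_of_nonneg_left (by linarith) (Nat.cast_nonneg n)
  have hna : (n : ℝ) ≤ Real.pi/2 + n * (2 * Real.pi) := by linarith
  have hab : Real.pi/2 + n * (2 * Real.pi) ≤ (Real.pi/2 + n * (2 * Real.pi)) + Real.pi := by
    linarith
  have hfa : (Real.pi/2 + n * (2 * Real.pi)) * Real.sin (Real.pi/2 + n * (2 * Real.pi))
      = Real.pi/2 + n * (2 * Real.pi) := by
    rw [Real.sin_add_nat_mul_two_pi, Real.sin_pi_div_two, mul_one]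
  have hfb : ((Real.pi/2 + n * (2 * Real.pi)) + Real.pi)
      * Real.sin ((Real.pi/2 + n * (2 * Real.pi)) + Real.pi)
      = -((Real.pi/2 + n * (2 * Real.pi)) + Real.pi) := by
    have hs : Real.sin ((Real.pi/2 + n * (2 * Real.pi)) + Real.pi) = -1 := by
      rw [show (Real.pi/2 + n * (2*Real.pi)) + Real.pi
          = (Real.pi/2 + Real.pi) + n * (2*Real.pi) by ring]
      rw [Real.sin_add_nat_mul_two_pi, Real.sin_add_pi, Real.sin_pi_div_two]
    rw [hs]; ring
  have hcont : ContinuousOn (fun t => t * Real.sin t)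
      (Set.Icc (Real.pi/2 + n * (2 * Real.pi)) ((Real.pi/2 + n * (2 * Real.pi)) + Real.pi)) :=
    (continuous_id.mul Real.continuous_sin).continuousOn
  have habs : |y| ≤ (n:ℝ) := le_trans (le_max_right M |y|) hn
  have hyabs := abs_le.mp habs
  have hy : y ∈ Set.Icc
      ((fun t => t * Real.sin t) ((Real.pi/2 + n * (2 * Real.pi)) + Real.pi))
      ((fun t => t * Real.sin t) (Real.pi/2 + n * (2 * Real.pi))) := by
    constructor
    · show ((Real.pi/2 + n * (2 * Real.pi)) + Real.pi)
        * Real.sin ((Real.pi/2 + n * (2 * Real.pi)) + Real.pi) ≤ y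
      rw [hfb]; linarith
    · show y ≤ (Real.pi/2 + n * (2 * Real.pi)) * Real.sin (Real.pi/2 + n * (2 * Real.pi))
      rw [hfa]; linarith
  obtain ⟨t, ht, hft⟩ := intermediate_value_Icc' hab hcont hy
  refine ⟨t, ?_, hft⟩
  have hM : M ≤ (n:ℝ) := le_trans (le_max_left M |y|) hn
  linarith [ht.1]

lemma diff_eq' {a b : ℂ} (ha : a ≠ 0) (hab : a + b ≠ 0) :
    (1 - 1/a) - (1 - 1/(a+b)) = -b/(a*(a+b)) := by
  field_simp
  ring

lemma exp_diff_le {u t : ℝ} (hu : 0 ≤ u) (hut : u ≤ t) :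
    Real.exp (-u) - Real.exp (-t) ≤ t - u := by
  have h1 : Real.exp (-u) ≤ 1 := by
    rw [show (1:ℝ) = Real.exp 0 from (Real.exp_zero).symm]
    exact Real.exp_le_exp.mpr (by linarith)
  have h2 : (u - t) + 1 ≤ Real.exp (u - t) := Real.add_one_le_exp _
  have h3 : Real.exp (-t) = Real.exp (-u) * Real.exp (u - t) := by
    rw [← Real.exp_add]; ring_nf
  nlinarith [Real.exp_pos (-u), Real.exp_pos (u - t)]

lemma tsin_lip {u t T : ℝ} (hu : 0 ≤ u) (hut : u ≤ t) (htT : t ≤ T) :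
    |t * Real.sin t - u * Real.sin u| ≤ (1 + T) * (t - u) := by
  have hder : ∀ x : ℝ, HasDerivAt (fun ξ => ξ * Real.sin ξ) (Real.sin x + x * Real.cos x) x := by
    intro x
    have := (hasDerivAt_id' x).mul (Real.hasDerivAt_sin x)
    exact this.congr_deriv (by ring)
  have hint : IntervalIntegrable (fun x => Real.sin x + x * Real.cos x) MeasureTheory.volume u t :=
    (Real.continuous_sin.add (continuous_id.mul Real.continuous_cos)).intervalIntegrable _ _
  have heq := intervalIntegral.integral_eq_sub_of_hasDerivAt (a := u) (b := t)
    (fun x _ => hder x) hint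
  have hnorm := intervalIntegral.norm_integral_le_of_norm_le_const (C := 1 + T)
    (f := fun x => Real.sin x + x * Real.cos x) (a := u) (b := t) ?_
  · rw [heq] at hnorm
    rw [Real.norm_eq_abs] at hnorm
    rwa [_root_.abs_of_nonneg (by linarith : (0:ℝ) ≤ t - u)] at hnorm
  · intro x hx
    rw [Set.uIoc_of_le hut] at hx
    have hx0 : 0 ≤ x := le_trans hu (le_of_lt hx.1)
    have hxT : x ≤ T := le_trans hx.2 htT
    rw [Real.norm_eq_abs]
    calc |Real.sin x + x * Real.cos x| ≤ |Real.sin x| + |x * Real.cos x| := abs_add_le _ _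
      _ ≤ 1 + T := by
          have h1 : |Real.sin x| ≤ 1 := Real.abs_sin_le_one x
          have h2 : |x * Real.cos x| ≤ T := by
            rw [abs_mul, _root_.abs_of_nonneg hx0]
            have := Real.abs_cos_le_one x
            nlinarith
          linarith

/-- The explicit family
`φ_{s,t}(z) = 1 + (z−1)/(1 − (z−1)(e^{−s} − e^{−t} + i(t·sin t − s·sin s)))` is a
well-defined evolution family of holomorphic self-maps of `𝔻` and, for every `s ≥ 0`
and `z ∈ 𝔻`, the ω-limit of `t ↦ φ_{s,t}(z)` is the full boundary circle of the
horocycle `{w ≠ 1 : Re(1/(1−w)) = Re(1/(1−z)) + e^{−s}} ∪ {1}` at the point `1`. -/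
theorem example_omega_limit_full_horocycle (φ : ℝ → ℝ → ℂ → ℂ)
    (hφ : ∀ s t : ℝ, ∀ z : ℂ, φ s t z =
      1 + (z - 1) / (1 - (z - 1) * (((Real.exp (-s) - Real.exp (-t) : ℝ) : ℂ) +
        Complex.I * ((t * Real.sin t - s * Real.sin s : ℝ) : ℂ)))) :
    (∀ s t : ℝ, 0 ≤ s → s ≤ t → ∀ z ∈ UD,
      (1 - (z - 1) * (((Real.exp (-s) - Real.exp (-t) : ℝ) : ℂ) +
        Complex.I * ((t * Real.sin t - s * Real.sin s : ℝ) : ℂ))) ≠ 0 ∧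
      φ s t z ∈ UD) ∧
    (∀ s t : ℝ, 0 ≤ s → s ≤ t → DifferentiableOn ℂ (φ s t) UD) ∧
    (∀ s : ℝ, 0 ≤ s → ∀ z ∈ UD, φ s s z = z) ∧
    (∀ s u t : ℝ, 0 ≤ s → s ≤ u → u ≤ t → ∀ z ∈ UD,
      φ s t z = φ u t (φ s u z)) ∧
    (∀ z ∈ UD, ∀ T : ℝ, 0 < T →
      ∃ k : ℝ → ℝ, (∀ ξ, 0 ≤ k ξ) ∧ MeasureTheory.IntegrableOn k (Set.Icc 0 T) ∧
        ∀ s u t : ℝ, 0 ≤ s → s ≤ u → u ≤ t → t ≤ T →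
          ‖φ s u z - φ s t z‖ ≤ ∫ ξ in u..t, k ξ) ∧
    (∀ s : ℝ, 0 ≤ s → ∀ z ∈ UD,
      {q : ℂ | ∃ tn : ℕ → ℝ, Tendsto tn atTop atTop ∧
          Tendsto (fun n => φ s (tn n) z) atTop (𝓝 q)} =
        {w : ℂ | w ≠ 1 ∧ (1 / (1 - w)).re = (1 / (1 - z)).re + Real.exp (-s)}
          ∪ {1}) := by
  have hφ' : ∀ s t : ℝ, ∀ z : ℂ, φ s t z = 1 + (z - 1) / (1 - (z - 1) * Af s t) := hφ
  have hform : ∀ s t : ℝ, s ≤ t → ∀ z : ℂ, ‖z‖ < 1 →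
      φ s t z = 1 - 1/(1/(1-z) + Af s t) := fun s t hst z hz =>
    (hφ' s t z).trans (phi_eq hz (Af_re_nonneg hst))
  refine ⟨?_, ?_, ?_, ?_, ?_, ?_⟩
  · -- well-definedness and self-map
    intro s t hs hst z hz
    have hz' : ‖z‖ < 1 := hz
    have hA := Af_re_nonneg hst
    refine ⟨denom_ne hz' hA, ?_⟩
    show ‖φ s t z‖ < 1
    rw [hform s t hst z hz']
    exact mem_of_re' (wre_pos hz' hA)
  · -- holomorphy
    intro s t hs hst
    have heq : φ s t = fun z => 1 + (z - 1) / (1 - (z - 1) * Af s t) := funext (hφ' s t)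
    rw [heq]
    intro z hz
    have hz' : ‖z‖ < 1 := hz
    have hd : (1:ℂ) - (z - 1) * Af s t ≠ 0 := denom_ne hz' (Af_re_nonneg hst)
    exact DifferentiableAt.differentiableWithinAt (by fun_prop (disch := exact hd))
  · -- identity
    intro s hs z hz
    rw [hφ' s s z]
    have h0 : Af s s = 0 := by unfold Af; simp
    rw [h0]
    simp
  · -- composition
    intro s u t hs hsu hut z hz
    have hz' : ‖z‖ < 1 := hz
    have hz2 : ‖φ s u z‖ < 1 := by
      rw [hform s u hsu z hz']
      exact mem_of_re' (wre_pos hz' (Af_re_nonneg hsu))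
    have hW : 1/(1-z) + Af s u ≠ 0 := w_ne_zero hz' (Af_re_nonneg hsu)
    have hinv : 1/(1 - φ s u z) = 1/(1-z) + Af s u := by
      rw [hform s u hsu z hz']
      exact inv_one_sub' hW
    rw [hform s t (le_trans hsu hut) z hz', hform u t hut _ hz2, hinv, add_assoc, Af_add]
  · -- absolute continuity
    intro z hz T hT
    have hz' : ‖z‖ < 1 := hz
    refine ⟨fun _ => 4*(2+T), fun ξ => by positivity, ?_, ?_⟩
    · exact integrableOn_const measure_Icc_lt_top.ne
    · intro s u t hs hsu hut htT
      have h0u : 0 ≤ u := le_trans hs hsu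
      have e1 : φ s u z = 1 - 1/(1/(1-z) + Af s u) := hform s u hsu z hz'
      have e2 : φ s t z = 1 - 1/(1/(1-z) + Af s t) := hform s t (hsu.trans hut) z hz'
      have hWu : 1/2 < (1/(1-z) + Af s u).re := wre_pos hz' (Af_re_nonneg hsu)
      have hWt : 1/2 < (1/(1-z) + Af s t).re := wre_pos hz' (Af_re_nonneg (hsu.trans hut))
      have hWu0 : 1/(1-z) + Af s u ≠ 0 := w_ne_zero hz' (Af_re_nonneg hsu)
      have hWt0 : 1/(1-z) + Af s t ≠ 0 := w_ne_zero hz' (Af_re_nonneg (hsu.trans hut))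
      have hWteq : 1/(1-z) + Af s t = (1/(1-z) + Af s u) + Af u t := by
        rw [add_assoc, Af_add]
      have hdiff : φ s u z - φ s t z
          = -(Af u t) / ((1/(1-z) + Af s u) * (1/(1-z) + Af s t)) := by
        rw [e1, e2, hWteq]
        exact diff_eq' hWu0 (hWteq ▸ hWt0)
      have hWua : 1/2 ≤ ‖1/(1-z) + Af s u‖ :=
        le_trans (le_of_lt hWu) (Complex.re_le_norm _)
      have hWta : 1/2 ≤ ‖1/(1-z) + Af s t‖ :=
        le_trans (le_of_lt hWt) (Complex.re_le_norm _)
      have habsA : ‖Af u t‖ ≤ (2+T)*(t-u) := by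
        have h1 := Complex.norm_le_abs_re_add_abs_im (Af u t)
        rw [Af_re, Af_im] at h1
        have h2 : |Real.exp (-u) - Real.exp (-t)| ≤ t - u := by
          rw [_root_.abs_of_nonneg (sub_nonneg.mpr (Real.exp_le_exp.mpr (by linarith)))]
          exact exp_diff_le h0u hut
        have h3 := tsin_lip h0u hut htT
        nlinarith
      rw [hdiff]
      rw [norm_div, norm_neg, norm_mul]
      rw [intervalIntegral.integral_const, smul_eq_mul]
      have hpos : 0 < ‖1/(1-z) + Af s u‖ * ‖1/(1-z) + Af s t‖ := by
        nlinarith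
      rw [div_le_iff₀ hpos]
      have hAnn : 0 ≤ ‖Af u t‖ := norm_nonneg _
      have h14 : 1/4 ≤ ‖1/(1-z) + Af s u‖ * ‖1/(1-z) + Af s t‖ := by
        nlinarith
      have hcoef : 0 ≤ (t - u) * (4*(2+T)) := by nlinarith
      nlinarith [mul_le_mul_of_nonneg_left h14 hcoef]
  · -- omega limit
    intro s hs z hz
    have hz' : ‖z‖ < 1 := hz
    have hw := half_lt_re' hz'
    ext q
    simp only [Set.mem_setOf_eq, Set.mem_union, Set.mem_singleton_iff]
    constructor
    · rintro ⟨tn, htn, hlim⟩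
      by_cases hq1 : q = 1
      · exact Or.inr hq1
      left
      refine ⟨hq1, ?_⟩
      have hev : ∀ᶠ n in atTop, s ≤ tn n := htn.eventually_ge_atTop s
      have h1q : (1:ℂ) - q ≠ 0 := sub_ne_zero.mpr (Ne.symm hq1)
      have hsub : Tendsto (fun n => (1 - φ s (tn n) z)⁻¹) atTop (𝓝 (1-q)⁻¹) :=
        (tendsto_const_nhds.sub hlim).inv₀ h1q
      have hcong : Tendsto (fun n => 1/(1-z) + Af s (tn n)) atTop (𝓝 (1-q)⁻¹) := by
        apply hsub.congr'
        filter_upwards [hev] with n hn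
        rw [hform s (tn n) hn z hz', ← one_div]
        exact inv_one_sub' (w_ne_zero hz' (Af_re_nonneg hn))
      have hre1 : Tendsto (fun n => (1/(1-z) + Af s (tn n)).re) atTop (𝓝 (((1-q)⁻¹).re)) :=
        (Complex.continuous_re.tendsto _).comp hcong
      have hexp : Tendsto (fun n => Real.exp (-(tn n))) atTop (𝓝 0) :=
        Real.tendsto_exp_neg_atTop_nhds_zero.comp htn
      have hre2 : Tendsto (fun n => (1/(1-z) + Af s (tn n)).re) atTop
          (𝓝 ((1/(1-z)).re + Real.exp (-s))) := by
        have heq : ∀ n, (1/(1-z) + Af s (tn n)).re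
            = (1/(1-z)).re + (Real.exp (-s) - Real.exp (-(tn n))) := by
          intro n; rw [Complex.add_re, Af_re]
        have h0 : Tendsto (fun n => (1/(1-z)).re + (Real.exp (-s) - Real.exp (-(tn n))))
            atTop (𝓝 ((1/(1-z)).re + (Real.exp (-s) - 0))) :=
          tendsto_const_nhds.add (tendsto_const_nhds.sub hexp)
        rw [sub_zero] at h0
        exact h0.congr (fun n => (heq n).symm)
      have := tendsto_nhds_unique hre1 hre2
      rw [one_div]
      exact this
    · rintro (⟨hq1, hqre⟩ | hq1)
      · -- interior circle point
        have h1q : (1:ℂ) - q ≠ 0 := sub_ne_zero.mpr (Ne.symm hq1)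
        have hW0 : 1/(1-q) ≠ 0 := one_div_ne_zero h1q
        have hqW : q = 1 - 1/(1/(1-q)) := by field_simp; ring
        have hch : ∀ n : ℕ, ∃ t : ℝ, max s n ≤ t ∧
            t * Real.sin t = (1/(1-q)).im - (1/(1-z)).im + s * Real.sin s :=
          fun n => exists_tsint _ (max s n)
        choose tn htn1 htn2 using hch
        have htns : ∀ n, s ≤ tn n := fun n => le_trans (le_max_left _ _) (htn1 n)
        have htnn : ∀ n : ℕ, (n:ℝ) ≤ tn n := fun n => le_trans (le_max_right _ _) (htn1 n)
        have htop : Tendsto tn atTop atTop :=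
          tendsto_atTop_mono htnn tendsto_natCast_atTop_atTop
        refine ⟨tn, htop, ?_⟩
        have hkey : ∀ n, 1/(1-z) + Af s (tn n)
            = 1/(1-q) - ((Real.exp (-(tn n)) : ℝ) : ℂ) := by
          intro n
          apply Complex.ext
          · rw [Complex.add_re, Af_re, Complex.sub_re, Complex.ofReal_re, hqre]
            ring
          · rw [Complex.add_im, Af_im, htn2 n, Complex.sub_im, Complex.ofReal_im]
            ring
        have hexp : Tendsto (fun n => Real.exp (-(tn n))) atTop (𝓝 0) :=
          Real.tendsto_exp_neg_atTop_nhds_zero.comp htop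
        have hWlim : Tendsto (fun n => 1/(1-z) + Af s (tn n)) atTop (𝓝 (1/(1-q))) := by
          have h0 : Tendsto (fun n => 1/(1-q) - ((Real.exp (-(tn n)) : ℝ) : ℂ)) atTop
              (𝓝 (1/(1-q) - 0)) :=
            tendsto_const_nhds.sub ((Complex.continuous_ofReal.tendsto 0).comp hexp)
          rw [sub_zero] at h0
          exact h0.congr (fun n => (hkey n).symm)
        have hfin : Tendsto (fun n => 1 - 1/(1/(1-z) + Af s (tn n))) atTop
            (𝓝 (1 - 1/(1/(1-q)))) := by
          simpa only [one_div] using tendsto_const_nhds.sub (hWlim.inv₀ hW0)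
        rw [← hqW] at hfin
        exact hfin.congr (fun n => (hform s (tn n) (htns n) z hz').symm)
      · -- q = 1
        subst hq1
        have hch : ∀ n : ℕ, ∃ t : ℝ, max s n ≤ t ∧ t * Real.sin t
            = (n:ℝ) + s * Real.sin s - (1/(1-z)).im :=
          fun n => exists_tsint _ (max s n)
        choose tn htn1 htn2 using hch
        have htns : ∀ n, s ≤ tn n := fun n => le_trans (le_max_left _ _) (htn1 n)
        have htnn : ∀ n : ℕ, (n:ℝ) ≤ tn n := fun n => le_trans (le_max_right _ _) (htn1 n)
        have htop : Tendsto tn atTop atTop :=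
          tendsto_atTop_mono htnn tendsto_natCast_atTop_atTop
        refine ⟨tn, htop, ?_⟩
        have hlow : ∀ n : ℕ, (n:ℝ) ≤ ‖1/(1-z) + Af s (tn n)‖ := by
          intro n
          have him : (1/(1-z) + Af s (tn n)).im = (n:ℝ) := by
            rw [Complex.add_im, Af_im, htn2 n]; ring
          calc (n:ℝ) = (1/(1-z) + Af s (tn n)).im := him.symm
            _ ≤ |(1/(1-z) + Af s (tn n)).im| := le_abs_self _
            _ ≤ ‖_‖ := Complex.abs_im_le_norm _
        have habs : Tendsto (fun n => ‖1/(1-z) + Af s (tn n)‖) atTop atTop :=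
          tendsto_atTop_mono hlow tendsto_natCast_atTop_atTop
        have hinv : Tendsto (fun n => (1/(1-z) + Af s (tn n))⁻¹) atTop (𝓝 0) := by
          rw [tendsto_zero_iff_norm_tendsto_zero]
          simp only [norm_inv]
          exact tendsto_inv_atTop_zero.comp habs
        have hfin : Tendsto (fun n => 1 - 1/(1/(1-z) + Af s (tn n))) atTop (𝓝 1) := by
          simp only [one_div]
          have := tendsto_const_nhds.sub hinv (a := (1:ℂ)) (f := fun _ : ℕ => (1:ℂ))
          simpa using this
        exact hfin.congr (fun n => (hform s (tn n) (htns n) z hz').symm)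
end
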